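/- arXiv:2206.14536 — 2 statements merged into one kernel-verified Lean document; each statement's English description precedes it below -/
import Mathlib

section
/- Let G = (V,E) be a simple graph with n vertices and m edges, fix a bijection η : E → {1,…,m}, and let L be a k-assignment of G with k ≥ 2. Then P(G,L) − P(G,k) ≥ (1/k)·Σ_{e ∈ E} α(e)·Q_η(G,e,k). -/
open Finset

variable {V : Type*}

/-- The number of proper colorings of `G` using the colors `{1, …, k}`. -/
noncomputable def propCol (G : SimpleGraph V) (k : ℕ) : ℕ :=
  Set.ncard {f : V → ℕ | (∀ v, f v ∈ Finset.Icc 1 k) ∧ ∀ ⦃a b : V⦄, G.Adj a b → f a ≠ f b}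

/-- The number of `L`-colorings of `G`, for an assignment `L` of color lists. -/
noncomputable def listCol (G : SimpleGraph V) (L : V → Finset ℕ) : ℕ :=
  Set.ncard {f : V → ℕ | (∀ v, f v ∈ L v) ∧ ∀ ⦃a b : V⦄, G.Adj a b → f a ≠ f b}

/-- `α(uv) = |L(u) \ L(v)|`, symmetrized (when `|L(u)| = |L(v)|` one has
`|L(u) \ L(v)| = |L(v) \ L(u)|`, so this is exactly `|L(u) \ L(v)|`). -/
noncomputable def alphaL (L : V → Finset ℕ) : Sym2 V → ℕ :=
  Sym2.lift ⟨fun a b => ((L a) \ (L b)).card ⊔ ((L b) \ (L a)).card,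
    fun a b => by simp [sup_comm]⟩

/-- `B` is the edge set of a broken cycle of `G` with respect to the edge ordering `η`:
the edge set of a path `v₁v₂⋯v_r` of `G` with `r ≥ 3` such that `v₁v_r ∈ E(G)` and
`η(v₁v_r) < η(v_iv_{i+1})` for each `i`. -/
def IsBrokenCycle [DecidableEq V] (G : SimpleGraph V) (η : Sym2 V → ℕ)
    (B : Finset (Sym2 V)) : Prop :=
  ∃ (u w : V) (p : G.Walk u w), p.IsPath ∧ 2 ≤ p.length ∧ G.Adj u w ∧
    (∀ f ∈ p.edges, η s(u, w) < η f) ∧ B = p.edges.toFinset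

/-- `NB_i(G)`: the collection of `i`-element subsets of `E(G)` containing no broken cycle. -/
def NBset [DecidableEq V] (G : SimpleGraph V) (η : Sym2 V → ℕ) (i : ℕ) :
    Set (Finset (Sym2 V)) :=
  {A : Finset (Sym2 V) | ↑A ⊆ G.edgeSet ∧ A.card = i ∧
    ∀ B : Finset (Sym2 V), IsBrokenCycle G η B → ¬ B ⊆ A}

/-- `|NB_i(G)|`. -/
noncomputable def NBcard [DecidableEq V] (G : SimpleGraph V) (η : Sym2 V → ℕ) (i : ℕ) : ℕ :=
  Set.ncard (NBset G η i)

/-- `|NB_i(G, e)|`: the number of `i`-element subsets of `E(G)` that contain `e`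
and contain no broken cycle. -/
noncomputable def NBe [DecidableEq V] (G : SimpleGraph V) (η : Sym2 V → ℕ)
    (i : ℕ) (e : Sym2 V) : ℕ :=
  Set.ncard {A : Finset (Sym2 V) | A ∈ NBset G η i ∧ e ∈ A}

/-- `Q_η(G, e, x)`, where `n` is the number of vertices of `G`. -/
noncomputable def Qeta [DecidableEq V] [Fintype V] (G : SimpleGraph V)
    (η : Sym2 V → ℕ) (e : Sym2 V) (x : ℝ) : ℝ :=
  (∑ i ∈ (Finset.Icc 1 (Fintype.card V - 1)).filter (fun i => Odd i),
      (NBe G η i e : ℝ) / i * x ^ (Fintype.card V - i)) -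
  ∑ i ∈ (Finset.Icc 2 (Fintype.card V - 1)).filter (fun i => Even i),
      (NBe G η i e : ℝ) * x ^ (Fintype.card V - i)

/-- The contraction `G/e` of the edge `e = uv`: the vertex `v` is merged into `u`
(so `v` becomes an isolated vertex), loops are removed and parallel edges are merged. -/
def contractE (G : SimpleGraph V) (u v : V) : SimpleGraph V :=
  SimpleGraph.fromRel (fun a b =>
    (G.Adj a b ∧ a ≠ v ∧ b ≠ v) ∨ (a = u ∧ b ≠ v ∧ G.Adj v b))

/-- The number of triangles (3-cliques) of `H`. -/
noncomputable def triangleCount (H : SimpleGraph V) : ℕ :=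
  Set.ncard {s : Finset V | H.IsNClique 3 s}

/-- `|NB₂(H)| = C(|E(H)|, 2) − △(H)`: the number of 2-element subsets of `E(H)`
containing no broken cycle (this count is independent of the edge ordering). -/
noncomputable def NB2 (H : SimpleGraph V) : ℕ :=
  Nat.choose (H.edgeSet.ncard) 2 - triangleCount H

/-- `C` is the edge set of a 4-cycle of `G`. -/
def IsFourCycle [DecidableEq V] (G : SimpleGraph V) (C : Finset (Sym2 V)) : Prop :=
  ∃ (u : V) (p : G.Walk u u), p.IsCycle ∧ p.length = 4 ∧ C = p.edges.toFinset

/-- The number of 4-cycles of `G` containing the edge `e`. -/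
noncomputable def fourCyclesOn [DecidableEq V] (G : SimpleGraph V) (e : Sym2 V) : ℕ :=
  Set.ncard {C : Finset (Sym2 V) | IsFourCycle G C ∧ e ∈ C}

/-- `c₄(G)`: the maximum over edges `e` of the number of 4-cycles of `G` containing `e`,
i.e. the least `r` such that every edge lies in at most `r` 4-cycles. -/
noncomputable def c4 [DecidableEq V] (G : SimpleGraph V) : ℕ :=
  sSup {r : ℕ | ∃ e ∈ G.edgeSet, r = fourCyclesOn G e}

/-- `β(T)` for the connected component `c` of `H`: the number of colors lying in every
list `L w` for `w` a vertex of the component `c`. -/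
noncomputable def betaComp (L : V → Finset ℕ) (H : SimpleGraph V)
    (c : H.ConnectedComponent) : ℕ :=
  Set.ncard {x : ℕ | ∀ w : V, H.connectedComponentMk w = c → x ∈ L w}

/-- `∏_j β(T_j)` over the connected components `T_j` of the spanning subgraph `H`. -/
noncomputable def betaProd (L : V → Finset ℕ) (H : SimpleGraph V) : ℕ :=
  ∏ᶠ c : H.ConnectedComponent, betaComp L H c

set_option linter.unusedSectionVars false

namespace DZ

open SimpleGraph Finset

variable {V : Type*} [Fintype V] [DecidableEq V]

/-- `f` is constant across the pair `e`. -/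
def cOn (f : V → ℕ) (e : Sym2 V) : Prop := ∀ a b : V, s(a, b) = e → f a = f b

lemma cOn_mk {f : V → ℕ} {a b : V} : cOn f s(a, b) ↔ f a = f b := by
  constructor
  · intro h; exact h a b rfl
  · intro h x y hxy
    rw [Sym2.eq_iff] at hxy
    rcases hxy with ⟨rfl, rfl⟩ | ⟨rfl, rfl⟩
    · exact h
    · exact h.symm

open scoped Classical in
/-- Number of maps `f` with `f v ∈ L v` that are constant across every pair in `A`. -/
noncomputable def Nct (L : V → Finset ℕ) (A : Finset (Sym2 V)) : ℕ :=
  ((Fintype.piFinset L).filter (fun f => ∀ e ∈ A, cOn f e)).card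

lemma listCol_expansion (G : SimpleGraph V) [DecidableRel G.Adj] (L : V → Finset ℕ) :
    (listCol G L : ℤ) =
      ∑ A ∈ G.edgeFinset.powerset, (-1) ^ A.card * (Nct L A : ℤ) := by
  classical
  have hterm : ∀ A : Finset (Sym2 V), (-1 : ℤ) ^ A.card * (Nct L A : ℤ)
      = ∑ f ∈ Fintype.piFinset L,
          (if ∀ e ∈ A, cOn f e then (-1 : ℤ) ^ A.card else 0) := by
    intro A
    rw [← Finset.sum_filter, Finset.sum_const, Nct]
    push_cast
    ring
  rw [Finset.sum_congr rfl (fun A _ => hterm A), Finset.sum_comm]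
  have hinner : ∀ f : V → ℕ,
      (∑ A ∈ G.edgeFinset.powerset, if ∀ e ∈ A, cOn f e then (-1 : ℤ) ^ A.card else 0)
      = if ∀ e ∈ G.edgeFinset, ¬ cOn f e then 1 else 0 := by
    intro f
    rw [← Finset.sum_filter]
    have hfil : (G.edgeFinset.powerset.filter (fun A => ∀ e ∈ A, cOn f e))
        = (G.edgeFinset.filter (cOn f)).powerset := by
      ext A
      simp only [Finset.mem_filter, Finset.mem_powerset, Finset.subset_iff,
        Finset.mem_filter]
      constructor
      · rintro ⟨h1, h2⟩ e he; exact ⟨h1 he, h2 e he⟩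
      · intro h; exact ⟨fun {e} he => (h he).1, fun e he => (h he).2⟩
    rw [hfil, Finset.sum_powerset_neg_one_pow_card]
    congr 1
    simp [Finset.filter_eq_empty_iff]
  rw [Finset.sum_congr rfl (fun f _ => hinner f)]
  rw [← Finset.sum_filter, Finset.sum_const, nsmul_eq_mul, mul_one]
  -- now : (listCol G L : ℤ) = card of filter
  have hset : {f : V → ℕ | (∀ v, f v ∈ L v) ∧ ∀ ⦃a b : V⦄, G.Adj a b → f a ≠ f b}
      = ↑((Fintype.piFinset L).filter (fun f => ∀ e ∈ G.edgeFinset, ¬ cOn f e)) := by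
    ext f
    simp only [Set.mem_setOf_eq, Finset.coe_filter, Fintype.mem_piFinset]
    constructor
    · rintro ⟨h1, h2⟩
      refine ⟨h1, ?_⟩
      intro e he
      induction e using Sym2.ind with
      | _ a b =>
        rw [cOn_mk]
        exact h2 (by simpa [SimpleGraph.mem_edgeFinset] using he)
    · rintro ⟨h1, h2⟩
      refine ⟨h1, ?_⟩
      intro a b hab hfab
      exact h2 s(a, b) (by simpa [SimpleGraph.mem_edgeFinset]) (cOn_mk.mpr hfab)
  rw [listCol, hset, Set.ncard_coe_finset]

lemma propCol_eq_listCol (G : SimpleGraph V) (k : ℕ) :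
    propCol G k = listCol G (fun _ => Finset.Icc 1 k) := rfl

end DZ
namespace DZ
open SimpleGraph Finset
variable {V : Type*} [Fintype V] [DecidableEq V]

/-- `B` is a broken cycle with chord `e`. -/
def Chd (G : SimpleGraph V) (η : Sym2 V → ℕ) (e : Sym2 V) (B : Finset (Sym2 V)) : Prop :=
  ∃ (u w : V) (p : G.Walk u w), p.IsPath ∧ 2 ≤ p.length ∧ G.Adj u w ∧
    (∀ f ∈ p.edges, η s(u, w) < η f) ∧ e = s(u, w) ∧ B = p.edges.toFinset

lemma isBrokenCycle_iff_chd {G : SimpleGraph V} {η : Sym2 V → ℕ} {B : Finset (Sym2 V)} :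
    IsBrokenCycle G η B ↔ ∃ e, Chd G η e B := by
  constructor
  · rintro ⟨u, w, p, h1, h2, h3, h4, h5⟩
    exact ⟨s(u, w), u, w, p, h1, h2, h3, h4, rfl, h5⟩
  · rintro ⟨e, u, w, p, h1, h2, h3, h4, _, h5⟩
    exact ⟨u, w, p, h1, h2, h3, h4, h5⟩

def Bad (G : SimpleGraph V) (η : Sym2 V → ℕ) (A : Finset (Sym2 V)) : Prop :=
  ∃ B, IsBrokenCycle G η B ∧ B ⊆ A

open scoped Classical in
noncomputable def chordsIn (G : SimpleGraph V) [DecidableRel G.Adj] (η : Sym2 V → ℕ)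
    (A : Finset (Sym2 V)) : Finset (Sym2 V) :=
  G.edgeFinset.filter (fun e => ∃ B, Chd G η e B ∧ B ⊆ A)

variable {G : SimpleGraph V} [DecidableRel G.Adj] {η : Sym2 V → ℕ}

lemma Chd.mem_edgeFinset {e B} (h : Chd G η e B) : e ∈ G.edgeFinset := by
  obtain ⟨u, w, p, _, _, h3, _, rfl, _⟩ := h
  simpa [SimpleGraph.mem_edgeFinset] using h3

lemma Chd.lt {e B} (h : Chd G η e B) : ∀ f ∈ B, η e < η f := by
  obtain ⟨u, w, p, _, _, _, h4, rfl, rfl⟩ := h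
  intro f hf
  exact h4 f (List.mem_toFinset.mp hf)

lemma Chd.not_mem {e B} (h : Chd G η e B) : e ∉ B :=
  fun hmem => lt_irrefl _ (h.lt e hmem)

lemma Chd.subset_edgeFinset {e B} (h : Chd G η e B) : B ⊆ G.edgeFinset := by
  obtain ⟨u, w, p, _, _, _, _, rfl, rfl⟩ := h
  intro f hf
  rw [SimpleGraph.mem_edgeFinset]
  exact p.edges_subset_edgeSet (List.mem_toFinset.mp hf)

lemma walk_const {f : V → ℕ} {u w : V} (p : G.Walk u w)
    (hf : ∀ e ∈ p.edges, cOn f e) : f u = f w := by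
  induction p with
  | nil => rfl
  | @cons x y z h q ih =>
    exact (cOn_mk.mp (hf _ (by simp))).trans (ih fun e he => hf e (by simp [he]))

lemma Chd.reach {e B} (h : Chd G η e B) {f : V → ℕ}
    (hf : ∀ b ∈ B, cOn f b) : cOn f e := by
  obtain ⟨u, w, p, _, _, _, _, rfl, rfl⟩ := h
  have := walk_const p (fun e he => hf e (List.mem_toFinset.mpr he))
  exact cOn_mk.mpr this

lemma Nct_insert_eq {L : V → Finset ℕ} {e : Sym2 V} {B A : Finset (Sym2 V)}
    (h : Chd G η e B) (hBA : B ⊆ A) : Nct L (insert e A) = Nct L A := by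
  classical
  unfold Nct
  congr 1
  apply Finset.filter_congr
  intro f _
  simp only [Finset.mem_insert, eq_iff_iff]
  constructor
  · intro hall e' he'; exact hall e' (Or.inr he')
  · intro hall e' he'
    rcases he' with rfl | he'
    · exact h.reach fun b hb => hall b (hBA hb)
    · exact hall e' he'

lemma chordsIn_mono {A A' : Finset (Sym2 V)} (h : A ⊆ A') :
    chordsIn G η A ⊆ chordsIn G η A' := by
  classical
  intro e he
  rw [chordsIn, Finset.mem_filter] at he ⊢
  obtain ⟨h1, B, h2, h3⟩ := he
  exact ⟨h1, B, h2, h3.trans h⟩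

lemma mem_chordsIn_iff {A e} : e ∈ chordsIn G η A ↔ ∃ B, Chd G η e B ∧ B ⊆ A := by
  classical
  rw [chordsIn, Finset.mem_filter]
  constructor
  · rintro ⟨_, h⟩; exact h
  · rintro ⟨B, hB, hBA⟩; exact ⟨hB.mem_edgeFinset, B, hB, hBA⟩

lemma bad_iff_chordsIn_nonempty {A} : Bad G η A ↔ (chordsIn G η A).Nonempty := by
  constructor
  · rintro ⟨B, hB, hBA⟩
    obtain ⟨e, he⟩ := isBrokenCycle_iff_chd.mp hB
    exact ⟨e, mem_chordsIn_iff.mpr ⟨B, he, hBA⟩⟩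
  · rintro ⟨e, he⟩
    obtain ⟨B, hB, hBA⟩ := mem_chordsIn_iff.mp he
    exact ⟨B, isBrokenCycle_iff_chd.mpr ⟨e, hB⟩, hBA⟩

end DZ
namespace DZ
open SimpleGraph Finset
variable {V : Type*} [Fintype V] [DecidableEq V]
variable {G : SimpleGraph V} [DecidableRel G.Adj] {η : Sym2 V → ℕ}

lemma walk_split_edge {x y a b : V} (p : G.Walk x y) (h : s(a, b) ∈ p.edges) :
    (∃ (hab : G.Adj a b) (q : G.Walk x a) (r : G.Walk b y), p = q.append (Walk.cons hab r)) ∨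
    (∃ (hba : G.Adj b a) (q : G.Walk x b) (r : G.Walk a y), p = q.append (Walk.cons hba r)) := by
  induction p with
  | nil => simp at h
  | @cons u v w hadj t ih =>
    rw [SimpleGraph.Walk.edges_cons, List.mem_cons] at h
    rcases h with heq | hmem
    · rw [Sym2.eq_iff] at heq
      rcases heq with ⟨rfl, rfl⟩ | ⟨rfl, rfl⟩
      · exact Or.inl ⟨hadj, Walk.nil, t, rfl⟩
      · exact Or.inr ⟨hadj, Walk.nil, t, rfl⟩
    · rcases ih hmem with ⟨hab, q, r, rfl⟩ | ⟨hba, q, r, rfl⟩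
      · exact Or.inl ⟨hab, Walk.cons hadj q, r, (Walk.cons_append _ _ _).symm⟩
      · exact Or.inr ⟨hba, Walk.cons hadj q, r, (Walk.cons_append _ _ _).symm⟩

lemma mem_edges_of_length_one {x y : V} (p : G.Walk x y) (h : p.length = 1) :
    s(x, y) ∈ p.edges := by
  cases p with
  | nil => simp at h
  | @cons u v w hadj t =>
    have ht : t.length = 0 := by simpa using h
    have := SimpleGraph.Walk.eq_of_length_eq_zero ht
    subst this
    simp

lemma surgery {A : Finset (Sym2 V)} {e₀ e' : Sym2 V} {B B' : Finset (Sym2 V)}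
    (hB : Chd G η e₀ B) (hBA : B ⊆ A)
    (hB' : Chd G η e' B') (hB'A : B' ⊆ insert e₀ A) (he₀B' : e₀ ∈ B')
    (hlt : η e' < η e₀) : ∃ B'', Chd G η e' B'' ∧ B'' ⊆ A := by
  obtain ⟨u₀, w₀, p, hp, hlen, hadj₀, hη₀, he₀, hBdef⟩ := hB
  obtain ⟨u', w', p', hp', hlen', hadj', hη', he', hB'def⟩ := hB'
  subst he₀ he' hBdef hB'def
  rw [List.mem_toFinset] at he₀B'
  -- construct a walk W : u' → w' all of whose edges are in p.edges or p'.edges \ {e₀}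
  obtain ⟨W, hW⟩ :
      ∃ W : G.Walk u' w', ∀ f ∈ W.edges,
        f ∈ p.edges ∨ (f ∈ p'.edges ∧ f ≠ s(u₀, w₀)) := by
    rcases walk_split_edge p' he₀B' with ⟨hab, q, r, hdec⟩ | ⟨hba, q, r, hdec⟩
    · refine ⟨q.append (p.append r), ?_⟩
      have hnd : (q.append (Walk.cons hab r)).edges.Nodup := hdec ▸ hp'.edges_nodup
      rw [SimpleGraph.Walk.edges_append, SimpleGraph.Walk.edges_cons] at hnd
      have hq : s(u₀, w₀) ∉ q.edges := by
        intro hmem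
        exact (List.disjoint_of_nodup_append hnd) hmem (by simp)
      have hr : s(u₀, w₀) ∉ r.edges := by
        have := (List.nodup_append.mp hnd).2.1
        simp only [List.nodup_cons] at this
        exact this.1
      intro f hf
      rw [SimpleGraph.Walk.edges_append, SimpleGraph.Walk.edges_append, List.mem_append,
        List.mem_append] at hf
      rcases hf with hf | hf | hf
      · refine Or.inr ⟨?_, fun hfe => hq (hfe ▸ hf)⟩
        rw [hdec, SimpleGraph.Walk.edges_append]
        simp [hf]
      · exact Or.inl hf
      · refine Or.inr ⟨?_, fun hfe => hr (hfe ▸ hf)⟩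
        rw [hdec, SimpleGraph.Walk.edges_append, SimpleGraph.Walk.edges_cons]
        simp [hf]
    · refine ⟨q.append (p.reverse.append r), ?_⟩
      have hnd : (q.append (Walk.cons hba r)).edges.Nodup := hdec ▸ hp'.edges_nodup
      rw [SimpleGraph.Walk.edges_append, SimpleGraph.Walk.edges_cons] at hnd
      have hswap : s(w₀, u₀) = s(u₀, w₀) := Sym2.eq_swap
      have hq : s(u₀, w₀) ∉ q.edges := by
        intro hmem
        exact (List.disjoint_of_nodup_append hnd) hmem (by simp [hswap])
      have hr : s(u₀, w₀) ∉ r.edges := by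
        have := (List.nodup_append.mp hnd).2.1
        simp only [List.nodup_cons] at this
        exact fun hmem => this.1 (hswap ▸ hmem)
      intro f hf
      rw [SimpleGraph.Walk.edges_append, SimpleGraph.Walk.edges_append, List.mem_append,
        List.mem_append, SimpleGraph.Walk.edges_reverse, List.mem_reverse] at hf
      rcases hf with hf | hf | hf
      · refine Or.inr ⟨?_, fun hfe => hq (hfe ▸ hf)⟩
        rw [hdec, SimpleGraph.Walk.edges_append]
        simp [hf]
      · exact Or.inl hf
      · refine Or.inr ⟨?_, fun hfe => hr (hfe ▸ hf)⟩
        rw [hdec, SimpleGraph.Walk.edges_append, SimpleGraph.Walk.edges_cons]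
        simp [hf]
  -- now take the bypass
  have hWb : ∀ f ∈ W.bypass.edges, f ∈ p.edges ∨ (f ∈ p'.edges ∧ f ≠ s(u₀, w₀)) :=
    fun f hf => hW f (W.edges_bypass_subset hf)
  have hηb : ∀ f ∈ W.bypass.edges, η s(u', w') < η f := by
    intro f hf
    rcases hWb f hf with hf' | ⟨hf', _⟩
    · exact hlt.trans (hη₀ f hf')
    · exact hη' f hf'
  have hlen2 : 2 ≤ W.bypass.length := by
    by_contra hcon
    push_neg at hcon
    interval_cases h : W.bypass.length
    · exact hadj'.ne (SimpleGraph.Walk.eq_of_length_eq_zero h)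
    · have := hηb _ (mem_edges_of_length_one _ h)
      exact lt_irrefl _ this
  refine ⟨W.bypass.edges.toFinset, ⟨u', w', W.bypass, W.bypass_isPath, hlen2, hadj', hηb,
    rfl, rfl⟩, ?_⟩
  intro f hf
  rw [List.mem_toFinset] at hf
  rcases hWb f hf with hf' | ⟨hf', hne⟩
  · exact hBA (List.mem_toFinset.mpr hf')
  · rcases Finset.mem_insert.mp (hB'A (List.mem_toFinset.mpr hf')) with h1 | h1
    · exact absurd h1 hne
    · exact h1

end DZ
namespace DZ
open SimpleGraph Finset
variable {V : Type*} [Fintype V] [DecidableEq V]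
variable {G : SimpleGraph V} [DecidableRel G.Adj] {η : Sym2 V → ℕ}

noncomputable def mc (G : SimpleGraph V) [DecidableRel G.Adj] (η : Sym2 V → ℕ)
    (A : Finset (Sym2 V)) (h : (chordsIn G η A).Nonempty) : Sym2 V :=
  (Finset.exists_min_image (chordsIn G η A) η h).choose

lemma mc_mem {A} (h : (chordsIn G η A).Nonempty) : mc G η A h ∈ chordsIn G η A :=
  (Finset.exists_min_image (chordsIn G η A) η h).choose_spec.1

lemma mc_min {A} (h : (chordsIn G η A).Nonempty) :
    ∀ e' ∈ chordsIn G η A, η (mc G η A h) ≤ η e' :=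
  (Finset.exists_min_image (chordsIn G η A) η h).choose_spec.2

lemma chordsIn_subset_edgeFinset {A} : chordsIn G η A ⊆ G.edgeFinset := by
  intro e he
  obtain ⟨B, hB, _⟩ := mem_chordsIn_iff.mp he
  exact hB.mem_edgeFinset

lemma min_unique (hinj : Set.InjOn η G.edgeSet) {A : Finset (Sym2 V)} {e e' : Sym2 V}
    (he : e ∈ chordsIn G η A) (he' : e' ∈ chordsIn G η A)
    (hm : ∀ f ∈ chordsIn G η A, η e ≤ η f) (hm' : ∀ f ∈ chordsIn G η A, η e' ≤ η f) :
    e = e' := by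
  have h1 : e ∈ G.edgeSet := by
    have := chordsIn_subset_edgeFinset he; rwa [SimpleGraph.mem_edgeFinset] at this
  have h2 : e' ∈ G.edgeSet := by
    have := chordsIn_subset_edgeFinset he'; rwa [SimpleGraph.mem_edgeFinset] at this
  exact hinj h1 h2 (le_antisymm (hm e' he') (hm' e he))

/-- Case `mc ∈ A`: erasing keeps the same minimal chord. -/
lemma mc_erase (hinj : Set.InjOn η G.edgeSet) {A} (h : (chordsIn G η A).Nonempty)
    (hmem : mc G η A h ∈ A) :
    ∃ h' : (chordsIn G η (A.erase (mc G η A h))).Nonempty,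
      mc G η (A.erase (mc G η A h)) h' = mc G η A h := by
  obtain ⟨B, hB, hBA⟩ := mem_chordsIn_iff.mp (mc_mem h)
  have hBe : B ⊆ A.erase (mc G η A h) := fun f hf =>
    Finset.mem_erase.mpr ⟨fun hfe => hB.not_mem (by rwa [hfe] at hf), hBA hf⟩
  have he₀' : mc G η A h ∈ chordsIn G η (A.erase (mc G η A h)) :=
    mem_chordsIn_iff.mpr ⟨B, hB, hBe⟩
  refine ⟨⟨_, he₀'⟩, ?_⟩
  exact min_unique hinj (mc_mem _) he₀' (fun f hf => mc_min _ f hf)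
    (fun f hf => mc_min h f (chordsIn_mono (Finset.erase_subset _ _) hf))

/-- Case `mc ∉ A`: inserting keeps the same minimal chord (uses surgery). -/
lemma mc_insert (hinj : Set.InjOn η G.edgeSet) {A} (h : (chordsIn G η A).Nonempty)
    (hmem : mc G η A h ∉ A) :
    ∃ h' : (chordsIn G η (insert (mc G η A h) A)).Nonempty,
      mc G η (insert (mc G η A h) A) h' = mc G η A h := by
  obtain ⟨B, hB, hBA⟩ := mem_chordsIn_iff.mp (mc_mem h)
  have he₀' : mc G η A h ∈ chordsIn G η (insert (mc G η A h) A) :=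
    mem_chordsIn_iff.mpr ⟨B, hB, hBA.trans (Finset.subset_insert _ _)⟩
  have hmin' : ∀ f ∈ chordsIn G η (insert (mc G η A h) A), η (mc G η A h) ≤ η f := by
    intro f hf
    by_contra hcon
    push_neg at hcon
    obtain ⟨B', hB', hB'A⟩ := mem_chordsIn_iff.mp hf
    by_cases he₀B' : mc G η A h ∈ B'
    · obtain ⟨B'', hB'', hB''A⟩ := surgery hB hBA hB' hB'A he₀B' hcon
      exact absurd (mc_min h f (mem_chordsIn_iff.mpr ⟨B'', hB'', hB''A⟩)) (not_le.mpr hcon)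
    · have hB'A' : B' ⊆ A := fun g hg => by
        rcases Finset.mem_insert.mp (hB'A hg) with hge | hga
        · exact absurd (hge ▸ hg) he₀B'
        · exact hga
      exact absurd (mc_min h f (mem_chordsIn_iff.mpr ⟨B', hB', hB'A'⟩)) (not_le.mpr hcon)
  refine ⟨⟨_, he₀'⟩, ?_⟩
  exact min_unique hinj (mc_mem _) he₀' (fun f hf => mc_min _ f hf) hmin'

lemma bad_mono {A A' : Finset (Sym2 V)} (h : A ⊆ A') (hb : Bad G η A) : Bad G η A' := by
  obtain ⟨B, h1, h2⟩ := hb; exact ⟨B, h1, h2.trans h⟩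

open scoped Classical in
/-- The involution. -/
noncomputable def sig (G : SimpleGraph V) [DecidableRel G.Adj] (η : Sym2 V → ℕ)
    (A : Finset (Sym2 V)) : Finset (Sym2 V) :=
  if h : (chordsIn G η A).Nonempty then
    (if mc G η A h ∈ A then A.erase (mc G η A h) else insert (mc G η A h) A)
  else A

lemma sig_erase {A} (h : (chordsIn G η A).Nonempty) (hmem : mc G η A h ∈ A) :
    sig G η A = A.erase (mc G η A h) := by
  rw [sig, dif_pos h, if_pos hmem]

lemma sig_insert {A} (h : (chordsIn G η A).Nonempty) (hmem : mc G η A h ∉ A) :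
    sig G η A = insert (mc G η A h) A := by
  rw [sig, dif_pos h, if_neg hmem]

lemma sig_ne {A} (h : (chordsIn G η A).Nonempty) : sig G η A ≠ A := by
  by_cases hmem : mc G η A h ∈ A
  · rw [sig_erase h hmem]
    exact Finset.erase_ne_self.mpr hmem
  · rw [sig_insert h hmem]
    exact Finset.insert_ne_self.mpr hmem

lemma sig_invol (hinj : Set.InjOn η G.edgeSet) {A} (h : (chordsIn G η A).Nonempty) :
    sig G η (sig G η A) = A := by
  by_cases hmem : mc G η A h ∈ A
  · rw [sig_erase h hmem]
    obtain ⟨h', heq⟩ := mc_erase hinj h hmem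
    have : mc G η (A.erase (mc G η A h)) h' ∉ A.erase (mc G η A h) := by
      rw [heq]; exact Finset.notMem_erase _ _
    rw [sig_insert h' this, heq, Finset.insert_erase hmem]
  · rw [sig_insert h hmem]
    obtain ⟨h', heq⟩ := mc_insert hinj h hmem
    have : mc G η (insert (mc G η A h) A) h' ∈ insert (mc G η A h) A := by
      rw [heq]; exact Finset.mem_insert_self _ _
    rw [sig_erase h' this, heq, Finset.erase_insert hmem]

open scoped Classical in
lemma bad_cancel (hinj : Set.InjOn η G.edgeSet) (L : V → Finset ℕ) :
    ∑ A ∈ G.edgeFinset.powerset.filter (fun A => Bad G η A),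
      (-1 : ℤ) ^ A.card * (Nct L A : ℤ) = 0 := by
  have hne : ∀ A ∈ G.edgeFinset.powerset.filter (fun A => Bad G η A),
      (chordsIn G η A).Nonempty := by
    intro A hA
    exact bad_iff_chordsIn_nonempty.mp (Finset.mem_filter.mp hA).2
  refine Finset.sum_involution (fun A _ => sig G η A) ?_ ?_ ?_ ?_
  · intro A hA
    show (-1 : ℤ) ^ A.card * (Nct L A : ℤ) +
      (-1) ^ (sig G η A).card * (Nct L (sig G η A) : ℤ) = 0
    have h := hne A hA
    obtain ⟨B, hB, hBA⟩ := mem_chordsIn_iff.mp (mc_mem h)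
    by_cases hmem : mc G η A h ∈ A
    · rw [sig_erase h hmem]
      have hBe : B ⊆ A.erase (mc G η A h) := fun f hf =>
        Finset.mem_erase.mpr ⟨fun hfe => hB.not_mem (by rwa [hfe] at hf), hBA hf⟩
      have hN : Nct L A = Nct L (A.erase (mc G η A h)) := by
        conv_lhs => rw [← Finset.insert_erase hmem]
        exact Nct_insert_eq hB hBe
      rw [hN, Finset.card_erase_of_mem hmem]
      have hpos : 1 ≤ A.card := Finset.card_pos.mpr ⟨_, hmem⟩
      obtain ⟨c, hc⟩ : ∃ c, A.card = c + 1 := ⟨A.card - 1, by omega⟩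
      rw [hc]
      simp only [Nat.add_sub_cancel, pow_succ]
      ring
    · rw [sig_insert h hmem]
      rw [Nct_insert_eq hB hBA, Finset.card_insert_of_notMem hmem, pow_succ]
      ring
  · intro A hA _
    exact sig_ne (hne A hA)
  · intro A hA
    show sig G η A ∈ _
    have h := hne A hA
    obtain ⟨hpow, hbad⟩ := Finset.mem_filter.mp hA
    rw [Finset.mem_powerset] at hpow
    by_cases hmem : mc G η A h ∈ A
    · rw [sig_erase h hmem]
      obtain ⟨h', _⟩ := mc_erase hinj h hmem
      exact Finset.mem_filter.mpr ⟨Finset.mem_powerset.mpr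
        ((Finset.erase_subset _ _).trans hpow), bad_iff_chordsIn_nonempty.mpr h'⟩
    · rw [sig_insert h hmem]
      refine Finset.mem_filter.mpr ⟨Finset.mem_powerset.mpr ?_,
        bad_mono (Finset.subset_insert _ _) hbad⟩
      intro f hf
      rcases Finset.mem_insert.mp hf with rfl | hfa
      · exact chordsIn_subset_edgeFinset (mc_mem h)
      · exact hpow hfa
  · intro A hA
    show sig G η (sig G η A) = A
    exact sig_invol hinj (hne A hA)

open scoped Classical in
lemma listCol_nb_expansion (hinj : Set.InjOn η G.edgeSet) (L : V → Finset ℕ) :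
    (listCol G L : ℤ) =
      ∑ A ∈ G.edgeFinset.powerset.filter (fun A => ¬ Bad G η A),
        (-1) ^ A.card * (Nct L A : ℤ) := by
  rw [listCol_expansion G L,
    ← Finset.sum_filter_add_sum_filter_not G.edgeFinset.powerset (fun A => Bad G η A),
    bad_cancel hinj L, zero_add]

end DZ
namespace DZ
open SimpleGraph Finset
variable {V : Type*} [Fintype V] [DecidableEq V]
variable {G : SimpleGraph V} [DecidableRel G.Adj] {η : Sym2 V → ℕ}

lemma head_of_path {a y b : V} (p : G.Walk a y) (hp : p.IsPath) (hmem : s(a, b) ∈ p.edges) :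
    ∃ (h : G.Adj a b) (r : G.Walk b y), p = Walk.cons h r := by
  cases p with
  | nil => simp at hmem
  | @cons _ c _ h' t =>
    rw [SimpleGraph.Walk.edges_cons, List.mem_cons] at hmem
    rcases hmem with heq | hmem
    · rw [Sym2.eq_iff] at heq
      rcases heq with ⟨-, rfl⟩ | ⟨rfl, rfl⟩
      · exact ⟨h', t, rfl⟩
      · exact absurd rfl h'.ne
    · have ha : a ∈ t.support := SimpleGraph.Walk.fst_mem_support_of_mem_edges t hmem
      rw [SimpleGraph.Walk.cons_isPath_iff] at hp
      exact absurd ha hp.2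

lemma chd_of_cycle (hinj : Set.InjOn η G.edgeSet) {a b : V} (D : G.Walk a a)
    (hD : D.IsCycle) (hab : s(a, b) ∈ D.edges)
    (hmin : ∀ f ∈ D.edges, η s(a, b) ≤ η f) :
    ∃ B, Chd G η s(a, b) B ∧ B ⊆ D.edges.toFinset := by
  have hlen3 : 3 ≤ D.length := hD.three_le_length
  have hstrict : ∀ f ∈ D.edges, f ≠ s(a, b) → η s(a, b) < η f := by
    intro f hf hne
    refine lt_of_le_of_ne (hmin f hf) (fun hcon => hne ?_)
    exact hinj (D.edges_subset_edgeSet hf) (D.edges_subset_edgeSet hab) hcon.symm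
  cases D with
  | nil => exact absurd hD (SimpleGraph.Walk.IsCycle.not_of_nil)
  | @cons _ y _ h₁ q =>
    rw [SimpleGraph.Walk.cons_isCycle_iff] at hD
    obtain ⟨hq, hay⟩ := hD
    rw [SimpleGraph.Walk.edges_cons, List.mem_cons] at hab
    have hqlen : 2 ≤ q.length := by
      have : q.length + 1 = (Walk.cons h₁ q).length := (SimpleGraph.Walk.length_cons _ _).symm
      omega
    by_cases hcase : s(a, b) = s(a, y)
    · refine ⟨q.edges.toFinset, ⟨y, a, q, hq, hqlen, h₁.symm, ?_, ?_, rfl⟩, ?_⟩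
      · intro f hf
        have h1 : s(y, a) = s(a, b) := by rw [hcase]; exact Sym2.eq_swap
        rw [h1]
        refine hstrict f (by simp [hf]) ?_
        intro hcon
        rw [← hcon] at hcase
        exact hay (hcase ▸ hf)
      · rw [Sym2.eq_iff] at hcase
        rcases hcase with ⟨-, rfl⟩ | ⟨rfl, -⟩
        · exact Sym2.eq_swap
        · exact absurd rfl h₁.ne
      · intro f hf
        rw [List.mem_toFinset] at hf
        simp [hf]
    · replace hab : s(a, b) ∈ q.edges := by
        rcases hab with h | h
        · exact absurd h hcase
        · exact h
      have hab' : s(a, b) ∈ q.reverse.edges := by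
        rw [SimpleGraph.Walk.edges_reverse, List.mem_reverse]; exact hab
      obtain ⟨hadj, r, hqr⟩ := head_of_path q.reverse hq.reverse hab'
      have hrpath : r.IsPath ∧ a ∉ r.support := by
        have := hq.reverse
        rw [hqr, SimpleGraph.Walk.cons_isPath_iff] at this
        exact this
      have habr : s(a, b) ∉ r.edges := by
        have := hq.reverse.edges_nodup
        rw [hqr, SimpleGraph.Walk.edges_cons] at this
        exact (List.nodup_cons.mp this).1
      have hredges : ∀ f ∈ r.edges, f ∈ q.edges := by
        intro f hf
        have : f ∈ q.reverse.edges := by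
          rw [hqr, SimpleGraph.Walk.edges_cons]; exact List.mem_cons_of_mem _ hf
        rwa [SimpleGraph.Walk.edges_reverse, List.mem_reverse] at this
      -- the path qD : b → a around the cycle
      refine ⟨(r.append (Walk.cons h₁.symm Walk.nil)).edges.toFinset,
        ⟨b, a, r.append (Walk.cons h₁.symm Walk.nil), ?_, ?_, hadj.symm, ?_, Sym2.eq_swap.symm, rfl⟩, ?_⟩
      · rw [← SimpleGraph.Walk.isPath_reverse_iff, SimpleGraph.Walk.reverse_append]
        have h2 : (Walk.cons h₁.symm Walk.nil : G.Walk y a).reverse = Walk.cons h₁ Walk.nil := by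
          simp [SimpleGraph.Walk.reverse_cons]
        rw [h2, SimpleGraph.Walk.cons_append, SimpleGraph.Walk.nil_append,
          SimpleGraph.Walk.cons_isPath_iff]
        constructor
        · exact hrpath.1.reverse
        · rw [SimpleGraph.Walk.support_reverse, List.mem_reverse]
          exact hrpath.2
      · rw [SimpleGraph.Walk.length_append]
        have h3 : r.length + 1 = q.length := by
          have := congrArg SimpleGraph.Walk.length hqr
          rw [SimpleGraph.Walk.length_reverse, SimpleGraph.Walk.length_cons] at this
          omega
        simp only [SimpleGraph.Walk.length_cons, SimpleGraph.Walk.length_nil]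
        omega
      · intro f hf
        rw [SimpleGraph.Walk.edges_append, List.mem_append] at hf
        have h4 : s(b, a) = s(a, b) := Sym2.eq_swap
        rw [h4]
        rcases hf with hf | hf
        · refine hstrict f (by simp [hredges f hf]) (fun hcon => habr (hcon ▸ hf))
        · have : f = s(y, a) := by simpa using hf
          subst this
          refine hstrict s(y, a) (by simp [Sym2.eq_swap]) ?_
          rw [Sym2.eq_swap]
          exact fun hcon => hcase hcon.symm
      · intro f hf
        rw [List.mem_toFinset] at hf
        rw [SimpleGraph.Walk.edges_append, List.mem_append] at hf
        rcases hf with hf | hf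
        · simp [hredges f hf]
        · have : f = s(y, a) := by simpa using hf
          subst this
          simp [Sym2.eq_swap]

lemma bad_of_cycle (hinj : Set.InjOn η G.edgeSet) {A : Finset (Sym2 V)} {x : V}
    (C : G.Walk x x) (hC : C.IsCycle) (hCA : ∀ f ∈ C.edges, f ∈ A) : Bad G η A := by
  have hne : C.edges.toFinset.Nonempty := by
    have h3 := hC.three_le_length
    have : C.edges ≠ [] := by
      intro h
      have := C.length_edges
      rw [h] at this
      simp at this
      omega
    obtain ⟨f, hf⟩ := List.exists_mem_of_ne_nil _ this
    exact ⟨f, List.mem_toFinset.mpr hf⟩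
  obtain ⟨e, he, hmin⟩ := Finset.exists_min_image C.edges.toFinset η hne
  rw [List.mem_toFinset] at he
  induction e using Sym2.ind with
  | _ a b =>
    have ha : a ∈ C.support := SimpleGraph.Walk.fst_mem_support_of_mem_edges C he
    have hperm : (C.rotate a ha).edges.Perm C.edges := (C.rotate_edges a ha).perm
    have hC' : (C.rotate a ha).IsCycle := hC.rotate ha
    have hab' : s(a, b) ∈ (C.rotate a ha).edges := hperm.mem_iff.mpr he
    have hmin' : ∀ f ∈ (C.rotate a ha).edges, η s(a, b) ≤ η f := by
      intro f hf
      exact hmin f (List.mem_toFinset.mpr (hperm.mem_iff.mp hf))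
    obtain ⟨B, hB, hBsub⟩ := chd_of_cycle hinj (C.rotate a ha) hC' hab' hmin'
    refine ⟨B, isBrokenCycle_iff_chd.mpr ⟨_, hB⟩, ?_⟩
    intro f hf
    have := hBsub hf
    rw [List.mem_toFinset] at this
    exact hCA f (hperm.mem_iff.mp this)

/-- The spanning subgraph with edge set `A`. -/
def HA (A : Finset (Sym2 V)) : SimpleGraph V := SimpleGraph.fromEdgeSet ↑A

lemma HA_adj {A : Finset (Sym2 V)} {a b : V} : (HA A).Adj a b ↔ s(a, b) ∈ A ∧ a ≠ b := by
  rw [HA, SimpleGraph.fromEdgeSet_adj, Finset.mem_coe]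

lemma walk_HA_edges {A : Finset (Sym2 V)} {x y : V} (w : (HA A).Walk x y) :
    ∀ e ∈ w.edges, e ∈ A := by
  intro e he
  have := w.edges_subset_edgeSet he
  rw [HA, SimpleGraph.edgeSet_fromEdgeSet] at this
  exact Finset.mem_coe.mp this.1

lemma walk_HA_edgeSet {A : Finset (Sym2 V)} (hA : A ⊆ G.edgeFinset) {x y : V}
    (w : (HA A).Walk x y) : ∀ e ∈ w.edges, e ∈ G.edgeSet := by
  intro e he
  have := hA (walk_HA_edges w e he)
  rwa [SimpleGraph.mem_edgeFinset] at this

lemma not_reachable_erase (hinj : Set.InjOn η G.edgeSet) {A : Finset (Sym2 V)}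
    (hA : A ⊆ G.edgeFinset) (hnb : ¬ Bad G η A) {u v : V} (huv : s(u, v) ∈ A) :
    ¬ (HA (A.erase s(u, v))).Reachable u v := by
  intro hre
  have herA : A.erase s(u, v) ⊆ G.edgeFinset := (Finset.erase_subset _ _).trans hA
  obtain ⟨w⟩ := hre
  set p0 := w.bypass with hp0
  have hp0path : p0.IsPath := w.bypass_isPath
  have hp0edges : ∀ e ∈ p0.edges, e ∈ A.erase s(u, v) :=
    fun e he => walk_HA_edges w e (w.edges_bypass_subset he)
  have htrans : ∀ e ∈ p0.edges, e ∈ G.edgeSet :=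
    fun e he => walk_HA_edgeSet herA w e (w.edges_bypass_subset he)
  set p := p0.transfer G htrans with hp
  have hppath : p.IsPath := hp0path.transfer _
  have hpedges : p.edges = p0.edges := p0.edges_transfer _
  have hadj : G.Adj u v := by
    have := hA huv
    rwa [SimpleGraph.mem_edgeFinset, SimpleGraph.mem_edgeSet] at this
  have hC : (Walk.cons hadj p.reverse).IsCycle := by
    rw [SimpleGraph.Walk.cons_isCycle_iff]
    refine ⟨hppath.reverse, ?_⟩
    rw [SimpleGraph.Walk.edges_reverse, List.mem_reverse, hpedges]
    intro hmem
    exact (Finset.notMem_erase _ _) (hp0edges _ hmem)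
  refine hnb (bad_of_cycle hinj _ hC ?_)
  intro f hf
  rw [SimpleGraph.Walk.edges_cons, List.mem_cons] at hf
  rcases hf with rfl | hf
  · exact huv
  · rw [SimpleGraph.Walk.edges_reverse, List.mem_reverse, hpedges] at hf
    exact Finset.mem_of_mem_erase (hp0edges _ hf)

end DZ
namespace DZ
open SimpleGraph Finset
variable {V : Type*} [Fintype V] [DecidableEq V]
variable {G : SimpleGraph V} [DecidableRel G.Adj] {η : Sym2 V → ℕ}

lemma reach_join {A : Finset (Sym2 V)} {u v x y : V} (huv : s(u, v) ∈ A) (huvne : u ≠ v)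
    (h : (HA (A.erase s(u, v))).Reachable x u ∧ (HA (A.erase s(u, v))).Reachable v y) :
    (HA A).Reachable x y := by
  have hle : HA (A.erase s(u, v)) ≤ HA A := by
    rw [HA, HA]
    exact SimpleGraph.fromEdgeSet_mono (by simpa using Finset.erase_subset _ _)
  have h1 : (HA A).Reachable x u := (h.1).mono hle
  have h2 : (HA A).Reachable v y := (h.2).mono hle
  have h3 : (HA A).Adj u v := HA_adj.mpr ⟨huv, huvne⟩
  exact (h1.trans h3.reachable).trans h2

lemma reach_split {A : Finset (Sym2 V)} {u v x y : V}
    (hxy : (HA A).Reachable x y) :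
    (HA (A.erase s(u, v))).Reachable x y ∨
    ((HA (A.erase s(u, v))).Reachable x u ∧ (HA (A.erase s(u, v))).Reachable v y) ∨
    ((HA (A.erase s(u, v))).Reachable x v ∧ (HA (A.erase s(u, v))).Reachable u y) := by
  obtain ⟨w⟩ := hxy
  induction w with
  | nil => exact Or.inl (SimpleGraph.Reachable.refl _)
  | @cons a c d hadj t ih =>
    rcases ih with h | ⟨h1, h2⟩ | ⟨h1, h2⟩
    · -- t gives reach from c to d in erased graph or...
      by_cases hac : s(a, c) ∈ A.erase s(u, v)
      · have : (HA (A.erase s(u, v))).Adj a c :=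
          HA_adj.mpr ⟨hac, (HA_adj.mp hadj).2⟩
        exact Or.inl (this.reachable.trans h)
      · have hmem : s(a, c) ∈ A := (HA_adj.mp hadj).1
        have hne : a ≠ c := (HA_adj.mp hadj).2
        have heq : s(a, c) = s(u, v) := by
          by_contra hcon
          exact hac (Finset.mem_erase.mpr ⟨hcon, hmem⟩)
        rw [Sym2.eq_iff] at heq
        rcases heq with ⟨rfl, rfl⟩ | ⟨rfl, rfl⟩
        · exact Or.inr (Or.inl ⟨SimpleGraph.Reachable.refl _, h⟩)
        · exact Or.inr (Or.inr ⟨SimpleGraph.Reachable.refl _, h⟩)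
    · by_cases hac : s(a, c) ∈ A.erase s(u, v)
      · have : (HA (A.erase s(u, v))).Adj a c :=
          HA_adj.mpr ⟨hac, (HA_adj.mp hadj).2⟩
        exact Or.inr (Or.inl ⟨this.reachable.trans h1, h2⟩)
      · have hmem : s(a, c) ∈ A := (HA_adj.mp hadj).1
        have heq : s(a, c) = s(u, v) := by
          by_contra hcon
          exact hac (Finset.mem_erase.mpr ⟨hcon, hmem⟩)
        rw [Sym2.eq_iff] at heq
        rcases heq with ⟨rfl, rfl⟩ | ⟨rfl, rfl⟩
        · exact Or.inr (Or.inl ⟨SimpleGraph.Reachable.refl _, h2⟩)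
        · exact Or.inl h2
    · by_cases hac : s(a, c) ∈ A.erase s(u, v)
      · have : (HA (A.erase s(u, v))).Adj a c :=
          HA_adj.mpr ⟨hac, (HA_adj.mp hadj).2⟩
        exact Or.inr (Or.inr ⟨this.reachable.trans h1, h2⟩)
      · have hmem : s(a, c) ∈ A := (HA_adj.mp hadj).1
        have heq : s(a, c) = s(u, v) := by
          by_contra hcon
          exact hac (Finset.mem_erase.mpr ⟨hcon, hmem⟩)
        rw [Sym2.eq_iff] at heq
        rcases heq with ⟨rfl, rfl⟩ | ⟨rfl, rfl⟩
        · exact Or.inl h2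
        · exact Or.inr (Or.inr ⟨SimpleGraph.Reachable.refl _, h2⟩)

end DZ
namespace DZ
open SimpleGraph Finset
open scoped Classical
variable {V : Type*} [Fintype V] [DecidableEq V]
variable {G : SimpleGraph V} [DecidableRel G.Adj] {η : Sym2 V → ℕ}

noncomputable def ncomp (A : Finset (Sym2 V)) : ℕ :=
  Fintype.card (HA A).ConnectedComponent

noncomputable def Kc (L : V → Finset ℕ) (A : Finset (Sym2 V))
    (c : (HA A).ConnectedComponent) : Finset ℕ :=
  (Finset.univ.filter (fun w => (HA A).connectedComponentMk w = c)).inf'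
    ⟨Quot.out c, Finset.mem_filter.mpr ⟨Finset.mem_univ _, Quot.out_eq c⟩⟩ L

lemma mem_Kc {L : V → Finset ℕ} {A : Finset (Sym2 V)} {c : (HA A).ConnectedComponent}
    {x : ℕ} : x ∈ Kc L A c ↔ ∀ w : V, (HA A).connectedComponentMk w = c → x ∈ L w := by
  rw [Kc, ← Finset.singleton_subset_iff, ← Finset.le_iff_subset]
  refine Iff.trans (Finset.le_inf'_iff _ _) ?_
  constructor
  · intro h w hw
    exact Finset.singleton_subset_iff.mp (h w (Finset.mem_filter.mpr ⟨Finset.mem_univ _, hw⟩))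
  · intro h w hw
    exact Finset.singleton_subset_iff.mpr (h w (Finset.mem_filter.mp hw).2)

lemma Kc_congr {L : V → Finset ℕ} {A A' : Finset (Sym2 V)} {c : (HA A).ConnectedComponent}
    {c' : (HA A').ConnectedComponent}
    (h : Finset.univ.filter (fun w => (HA A).connectedComponentMk w = c)
       = Finset.univ.filter (fun w => (HA A').connectedComponentMk w = c')) :
    Kc L A c = Kc L A' c' := by
  rw [Kc, Kc]
  exact Finset.inf'_congr _ h (fun x _ => rfl)

lemma reach_const {A : Finset (Sym2 V)} {f : V → ℕ} (hf : ∀ e ∈ A, cOn f e) {x y : V}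
    (h : (HA A).Reachable x y) : f x = f y := by
  obtain ⟨w⟩ := h
  induction w with
  | nil => rfl
  | @cons a c d hadj t ih =>
    exact (cOn_mk.mp (hf _ (HA_adj.mp hadj).1)).trans ih

lemma Nct_eq_prod (L : V → Finset ℕ) (A : Finset (Sym2 V)) :
    Nct L A = ∏ c : (HA A).ConnectedComponent, (Kc L A c).card := by
  rw [← Fintype.card_piFinset, Nct]
  refine Finset.card_bij' (fun f _ => fun c => f (Quot.out c))
    (fun g _ => fun v => g ((HA A).connectedComponentMk v)) ?_ ?_ ?_ ?_
  · intro f hf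
    rw [Finset.mem_filter, Fintype.mem_piFinset] at hf
    rw [Fintype.mem_piFinset]
    intro c
    rw [mem_Kc]
    intro w hw
    have hre : (HA A).Reachable w (Quot.out c) :=
      (SimpleGraph.ConnectedComponent.eq).mp (by rw [hw]; exact (Quot.out_eq c).symm)
    show f (Quot.out c) ∈ L w
    rw [← reach_const hf.2 hre]
    exact hf.1 w
  · intro g hg
    rw [Fintype.mem_piFinset] at hg
    rw [Finset.mem_filter, Fintype.mem_piFinset]
    constructor
    · intro v
      exact mem_Kc.mp (hg ((HA A).connectedComponentMk v)) v rfl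
    · intro e he a b hab
      by_cases haeb : a = b
      · rw [haeb]
      · have hadj : (HA A).Adj a b := HA_adj.mpr ⟨hab ▸ he, haeb⟩
        have h5 : (HA A).connectedComponentMk a = (HA A).connectedComponentMk b :=
          SimpleGraph.ConnectedComponent.sound hadj.reachable
        show g ((HA A).connectedComponentMk a) = g ((HA A).connectedComponentMk b)
        rw [h5]
  · intro f hf
    rw [Finset.mem_filter] at hf
    funext v
    have hre : (HA A).Reachable v (Quot.out ((HA A).connectedComponentMk v)) :=
      (SimpleGraph.ConnectedComponent.eq).mp (Quot.out_eq _).symm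
    show f (Quot.out ((HA A).connectedComponentMk v)) = f v
    exact (reach_const hf.2 hre).symm
  · intro g hg
    funext c
    show g ((HA A).connectedComponentMk (Quot.out c)) = g c
    exact congrArg g (Quot.out_eq c)

/-- The map on components induced by erasing an edge. -/
noncomputable def phiE (A : Finset (Sym2 V)) (e : Sym2 V) :
    (HA (A.erase e)).ConnectedComponent → (HA A).ConnectedComponent :=
  SimpleGraph.ConnectedComponent.map (SimpleGraph.Hom.ofLE
    (SimpleGraph.fromEdgeSet_mono (by simpa using Finset.erase_subset e A)))

lemma phiE_mk {A : Finset (Sym2 V)} {e : Sym2 V} (w : V) :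
    phiE A e ((HA (A.erase e)).connectedComponentMk w) = (HA A).connectedComponentMk w :=
  SimpleGraph.ConnectedComponent.map_mk _ _

section Step
variable {A : Finset (Sym2 V)} {u v : V}
  (huv : s(u, v) ∈ A) (hne : u ≠ v)
  (hnuv : ¬ (HA (A.erase s(u, v))).Reachable u v)

include huv hne

lemma reach_iff_pair {y : V} :
    (HA A).Reachable y u ↔ (HA (A.erase s(u, v))).Reachable y u ∨
      (HA (A.erase s(u, v))).Reachable y v := by
  constructor
  · intro h
    rcases reach_split (u := u) (v := v) h with h | ⟨h1, h2⟩ | ⟨h1, h2⟩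
    · exact Or.inl h
    · exact Or.inl h1
    · exact Or.inr h1
  · intro h
    have hle : HA (A.erase s(u, v)) ≤ HA A :=
      SimpleGraph.fromEdgeSet_mono (by simpa using Finset.erase_subset _ _)
    have hadj : (HA A).Adj u v := HA_adj.mpr ⟨huv, hne⟩
    rcases h with h | h
    · exact h.mono hle
    · exact (h.mono hle).trans hadj.reachable.symm

include hnuv

lemma reach_iff_single {x y : V} (hx : ¬ (HA A).Reachable x u) :
    (HA A).Reachable y x ↔ (HA (A.erase s(u, v))).Reachable y x := by
  constructor
  · intro h
    have hle : HA (A.erase s(u, v)) ≤ HA A :=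
      SimpleGraph.fromEdgeSet_mono (by simpa using Finset.erase_subset _ _)
    have hadj : (HA A).Adj u v := HA_adj.mpr ⟨huv, hne⟩
    rcases reach_split (u := u) (v := v) h with h' | ⟨h1, h2⟩ | ⟨h1, h2⟩
    · exact h'
    · exact absurd ((h2.mono hle).symm.trans hadj.reachable.symm) hx
    · exact absurd (h2.mono hle).symm hx
  · intro h
    exact h.mono (SimpleGraph.fromEdgeSet_mono (by simpa using Finset.erase_subset _ _))

lemma fiber_pair :
    Finset.univ.filter (fun c' => phiE A s(u, v) c' = (HA A).connectedComponentMk u)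
      = {(HA (A.erase s(u, v))).connectedComponentMk u,
         (HA (A.erase s(u, v))).connectedComponentMk v} := by
  ext c'
  obtain ⟨y, rfl⟩ := Quot.exists_rep c'
  have : Quot.mk _ y = (HA (A.erase s(u, v))).connectedComponentMk y := rfl
  rw [this, Finset.mem_filter, phiE_mk, Finset.mem_insert, Finset.mem_singleton,
    SimpleGraph.ConnectedComponent.eq, SimpleGraph.ConnectedComponent.eq,
    SimpleGraph.ConnectedComponent.eq]
  simp only [Finset.mem_univ, true_and]
  exact reach_iff_pair huv hne

lemma vert_pair :
    Finset.univ.filter (fun w => (HA A).connectedComponentMk w = (HA A).connectedComponentMk u)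
      = Finset.univ.filter (fun w => (HA (A.erase s(u, v))).connectedComponentMk w
          = (HA (A.erase s(u, v))).connectedComponentMk u)
        ∪ Finset.univ.filter (fun w => (HA (A.erase s(u, v))).connectedComponentMk w
          = (HA (A.erase s(u, v))).connectedComponentMk v) := by
  ext w
  rw [Finset.mem_union, Finset.mem_filter, Finset.mem_filter, Finset.mem_filter,
    SimpleGraph.ConnectedComponent.eq, SimpleGraph.ConnectedComponent.eq,
    SimpleGraph.ConnectedComponent.eq]
  simp only [Finset.mem_univ, true_and]
  exact reach_iff_pair huv hne

lemma fiber_single {c : (HA A).ConnectedComponent}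
    (hc : c ≠ (HA A).connectedComponentMk u) :
    ∃ x : V, (HA A).connectedComponentMk x = c ∧
      Finset.univ.filter (fun c' => phiE A s(u, v) c' = c)
        = {(HA (A.erase s(u, v))).connectedComponentMk x} ∧
      Finset.univ.filter (fun w => (HA A).connectedComponentMk w = c)
        = Finset.univ.filter (fun w => (HA (A.erase s(u, v))).connectedComponentMk w
            = (HA (A.erase s(u, v))).connectedComponentMk x) := by
  obtain ⟨x, hx⟩ := Quot.exists_rep c
  have hx' : (HA A).connectedComponentMk x = c := hx
  have hxu : ¬ (HA A).Reachable x u := by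
    intro hcon
    exact hc (hx' ▸ SimpleGraph.ConnectedComponent.sound hcon)
  refine ⟨x, hx', ?_, ?_⟩
  · ext c'
    obtain ⟨y, rfl⟩ := Quot.exists_rep c'
    have h0 : Quot.mk _ y = (HA (A.erase s(u, v))).connectedComponentMk y := rfl
    rw [h0, Finset.mem_filter, phiE_mk, Finset.mem_singleton, ← hx',
      SimpleGraph.ConnectedComponent.eq, SimpleGraph.ConnectedComponent.eq]
    simp only [Finset.mem_univ, true_and]
    exact reach_iff_single huv hne hnuv hxu
  · ext w
    rw [Finset.mem_filter, Finset.mem_filter, ← hx',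
      SimpleGraph.ConnectedComponent.eq, SimpleGraph.ConnectedComponent.eq]
    simp only [Finset.mem_univ, true_and]
    exact reach_iff_single huv hne hnuv hxu

lemma mkuv_ne : (HA (A.erase s(u, v))).connectedComponentMk u
    ≠ (HA (A.erase s(u, v))).connectedComponentMk v := by
  intro hcon
  exact hnuv ((SimpleGraph.ConnectedComponent.eq).mp hcon)

lemma ncomp_erase_eq : ncomp (A.erase s(u, v)) = ncomp A + 1 := by
  have hcard := Finset.card_eq_sum_card_fiberwise
    (f := phiE A s(u, v)) (s := Finset.univ) (t := Finset.univ)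
    (fun x _ => Finset.mem_univ _)
  rw [Finset.sum_eq_sum_sdiff_singleton_add
    (Finset.mem_univ ((HA A).connectedComponentMk u))] at hcard
  have h1 : ∀ c ∈ (Finset.univ : Finset (HA A).ConnectedComponent) \
      {(HA A).connectedComponentMk u},
      (Finset.univ.filter (fun c' => phiE A s(u, v) c' = c)).card = 1 := by
    intro c hcmem
    have hc : c ≠ (HA A).connectedComponentMk u := by
      rcases Finset.mem_sdiff.mp hcmem with ⟨-, h⟩
      simpa using h
    obtain ⟨x, -, hfib, -⟩ := fiber_single huv hne hnuv hc
    rw [hfib, Finset.card_singleton]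
  rw [Finset.sum_congr rfl h1, fiber_pair huv hne hnuv] at hcard
  have h2 : ({(HA (A.erase s(u, v))).connectedComponentMk u,
      (HA (A.erase s(u, v))).connectedComponentMk v} : Finset _).card = 2 := by
    rw [Finset.card_insert_of_notMem (by simpa using mkuv_ne huv hne hnuv),
      Finset.card_singleton]
  rw [h2, Finset.sum_const, smul_eq_mul, mul_one] at hcard
  have h3 : ((Finset.univ : Finset (HA A).ConnectedComponent) \
      {(HA A).connectedComponentMk u}).card = Fintype.card (HA A).ConnectedComponent - 1 := by
    rw [Finset.card_sdiff_of_subset (by simp), Finset.card_singleton, Finset.card_univ]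
  have h4 : 1 ≤ Fintype.card (HA A).ConnectedComponent :=
    Fintype.card_pos_iff.mpr ⟨(HA A).connectedComponentMk u⟩
  rw [ncomp, ncomp, ← Finset.card_univ, hcard, h3]
  omega

lemma Kc_pair_eq {L : V → Finset ℕ} :
    Kc L A ((HA A).connectedComponentMk u)
      = Kc L (A.erase s(u, v)) ((HA (A.erase s(u, v))).connectedComponentMk u)
        ∩ Kc L (A.erase s(u, v)) ((HA (A.erase s(u, v))).connectedComponentMk v) := by
  ext x
  rw [Finset.mem_inter, mem_Kc, mem_Kc, mem_Kc]
  constructor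
  · intro h
    constructor
    · intro w hw
      refine h w ?_
      rw [SimpleGraph.ConnectedComponent.eq] at hw ⊢
      exact (reach_iff_pair huv hne).mpr (Or.inl hw)
    · intro w hw
      refine h w ?_
      rw [SimpleGraph.ConnectedComponent.eq] at hw ⊢
      have : (HA (A.erase s(u, v))).Reachable w v := hw
      exact (reach_iff_pair huv hne).mpr (Or.inr this)
  · rintro ⟨h1, h2⟩ w hw
    rw [SimpleGraph.ConnectedComponent.eq] at hw
    rcases (reach_iff_pair huv hne).mp hw with h | h
    · exact h1 w (SimpleGraph.ConnectedComponent.sound h)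
    · exact h2 w (SimpleGraph.ConnectedComponent.sound h)

end Step

end DZ
namespace DZ
open SimpleGraph Finset
open scoped Classical
variable {V : Type*} [Fintype V] [DecidableEq V]
variable {G : SimpleGraph V} [DecidableRel G.Adj] {η : Sym2 V → ℕ}

lemma alphaL_eq {L : V → Finset ℕ} {k : ℕ} (hL : ∀ w, (L w).card = k) (u v : V) :
    alphaL L s(u, v) = (L u \ L v).card := by
  have h1 : (L u \ L v).card = (L v \ L u).card := by
    have hu := Finset.card_inter_add_card_sdiff (L u) (L v)
    have hv := Finset.card_inter_add_card_sdiff (L v) (L u)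
    rw [hL u] at hu
    rw [hL v, Finset.inter_comm] at hv
    omega
  have h2 : alphaL L s(u, v) = (L u \ L v).card ⊔ (L v \ L u).card := by
    simp [alphaL]
  rw [h2, ← h1, sup_idem]

lemma HA_empty_bot : HA (∅ : Finset (Sym2 V)) = ⊥ := by
  rw [HA]; simp

lemma HA_empty_reach {w x : V} (h : (HA (∅ : Finset (Sym2 V))).Reachable w x) : w = x := by
  rw [HA_empty_bot] at h
  exact SimpleGraph.reachable_bot.mp h

lemma ncomp_empty : ncomp (∅ : Finset (Sym2 V)) = Fintype.card V := by
  rw [ncomp]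
  refine (Fintype.card_of_bijective (f := (HA (∅ : Finset (Sym2 V))).connectedComponentMk)
    ⟨?_, ?_⟩).symm
  · intro x y h
    exact HA_empty_reach ((SimpleGraph.ConnectedComponent.eq).mp h)
  · intro c
    obtain ⟨x, hx⟩ := Quot.exists_rep c
    exact ⟨x, hx⟩

lemma vertFilter_empty (c : (HA (∅ : Finset (Sym2 V))).ConnectedComponent) :
    Finset.univ.filter
        (fun w => (HA (∅ : Finset (Sym2 V))).connectedComponentMk w = c)
      = {Quot.out c} := by
  ext w
  simp only [Finset.mem_filter, Finset.mem_univ, true_and, Finset.mem_singleton]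
  constructor
  · intro hw
    exact HA_empty_reach ((SimpleGraph.ConnectedComponent.eq).mp
      (by rw [hw]; exact (Quot.out_eq c).symm))
  · rintro rfl
    exact Quot.out_eq c

lemma Kc_empty_card {L : V → Finset ℕ} {k : ℕ} (hL : ∀ w, (L w).card = k)
    (c : (HA (∅ : Finset (Sym2 V))).ConnectedComponent) : (Kc L ∅ c).card = k := by
  have h1 : Kc L ∅ c = L (Quot.out c) := by
    ext x
    rw [mem_Kc]
    constructor
    · intro h; exact h (Quot.out c) (Quot.out_eq c)
    · intro h w hw
      have : w = Quot.out c := HA_empty_reach ((SimpleGraph.ConnectedComponent.eq).mp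
        (by rw [hw]; exact (Quot.out_eq c).symm))
      rw [this]
      exact h
  rw [h1, hL]

lemma Kc_card_le {L : V → Finset ℕ} {k : ℕ} (hL : ∀ w, (L w).card = k)
    {A : Finset (Sym2 V)} (c : (HA A).ConnectedComponent) : (Kc L A c).card ≤ k := by
  rw [← hL (Quot.out c)]
  exact Finset.card_le_card (fun x hx => mem_Kc.mp hx _ (Quot.out_eq c))

lemma Kc_card_add_alpha {L : V → Finset ℕ} {k : ℕ} (hL : ∀ w, (L w).card = k)
    {A : Finset (Sym2 V)} {a b : V} (hab : s(a, b) ∈ A) (hne : a ≠ b) :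
    (Kc L A ((HA A).connectedComponentMk a)).card + alphaL L s(a, b) ≤ k := by
  have hsub : Kc L A ((HA A).connectedComponentMk a) ⊆ L a ∩ L b := by
    intro x hx
    rw [Finset.mem_inter]
    refine ⟨mem_Kc.mp hx a rfl, mem_Kc.mp hx b ?_⟩
    exact SimpleGraph.ConnectedComponent.sound
      ((HA_adj.mpr ⟨hab, hne⟩).reachable).symm
  have h1 : (Kc L A ((HA A).connectedComponentMk a)).card ≤ (L a ∩ L b).card :=
    Finset.card_le_card hsub
  have h2 := Finset.card_inter_add_card_sdiff (L a) (L b)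
  rw [hL a] at h2
  rw [alphaL_eq hL]
  omega

lemma Nct_const (k : ℕ) (A : Finset (Sym2 V)) :
    Nct (fun _ : V => Finset.Icc 1 k) A = k ^ (ncomp A) := by
  rw [Nct_eq_prod]
  have h1 : ∀ c : (HA A).ConnectedComponent,
      (Kc (fun _ : V => Finset.Icc 1 k) A c).card = k := by
    intro c
    have : Kc (fun _ : V => Finset.Icc 1 k) A c = Finset.Icc 1 k := by
      ext x
      rw [mem_Kc]
      constructor
      · intro h; exact h (Quot.out c) (Quot.out_eq c)
      · intro h w _; exact h
    rw [this, Nat.card_Icc]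
    omega
  rw [Finset.prod_congr rfl (fun c _ => h1 c), Finset.prod_const, Finset.card_univ, ncomp]

lemma ncomp_add_card (hinj : Set.InjOn η G.edgeSet) :
    ∀ A : Finset (Sym2 V), A ⊆ G.edgeFinset → ¬ Bad G η A →
      ncomp A + A.card = Fintype.card V := by
  intro A
  induction A using Finset.strongInduction with
  | _ A ih =>
    intro hA hnb
    rcases Finset.eq_empty_or_nonempty A with rfl | ⟨e, he⟩
    · simp [ncomp_empty]
    · induction e using Sym2.ind with
      | _ u v =>
        have hne : u ≠ v := by
          have := hA he
          rw [SimpleGraph.mem_edgeFinset, SimpleGraph.mem_edgeSet] at this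
          exact this.ne
        have hnuv := not_reachable_erase hinj hA hnb he
        have hstep := ncomp_erase_eq he hne hnuv
        have hih := ih (A.erase s(u, v)) (Finset.erase_ssubset he)
          ((Finset.erase_subset _ _).trans hA)
          (fun hb => hnb (bad_mono (Finset.erase_subset _ _) hb))
        rw [Finset.card_erase_of_mem he, hstep] at hih
        have hpos : 1 ≤ A.card := Finset.card_pos.mpr ⟨_, he⟩
        omega

lemma defect_erase {L : V → Finset ℕ} {k : ℕ} (hL : ∀ w, (L w).card = k)
    {A : Finset (Sym2 V)} {u v : V} (huv : s(u, v) ∈ A) (hne : u ≠ v)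
    (hnuv : ¬ (HA (A.erase s(u, v))).Reachable u v) :
    ∑ c : (HA A).ConnectedComponent, ((k : ℤ) - (Kc L A c).card)
      ≤ (∑ c' : (HA (A.erase s(u, v))).ConnectedComponent,
          ((k : ℤ) - (Kc L (A.erase s(u, v)) c').card)) + (alphaL L s(u, v) : ℤ) := by
  have hfib := Finset.sum_fiberwise_of_maps_to (g := phiE A s(u, v))
    (s := Finset.univ) (t := Finset.univ) (fun x _ => Finset.mem_univ _)
    (fun c' => ((k : ℤ) - (Kc L (A.erase s(u, v)) c').card))
  rw [← hfib]
  set c₀ := (HA A).connectedComponentMk u with hc₀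
  rw [Finset.sum_eq_sum_sdiff_singleton_add (Finset.mem_univ c₀)
    (fun c => ((k : ℤ) - (Kc L A c).card)),
    Finset.sum_eq_sum_sdiff_singleton_add (Finset.mem_univ c₀)]
  have h1 : ∀ c ∈ (Finset.univ : Finset (HA A).ConnectedComponent) \ {c₀},
      ((k : ℤ) - (Kc L A c).card)
        = ∑ c' ∈ Finset.univ.filter (fun c' => phiE A s(u, v) c' = c),
            ((k : ℤ) - (Kc L (A.erase s(u, v)) c').card) := by
    intro c hc
    have hcne : c ≠ c₀ := by
      rcases Finset.mem_sdiff.mp hc with ⟨-, h⟩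
      simpa using h
    obtain ⟨x, -, hfil, hvert⟩ := fiber_single huv hne hnuv hcne
    rw [hfil, Finset.sum_singleton, Kc_congr hvert]
  rw [Finset.sum_congr rfl h1]
  have h2 : ∑ c' ∈ Finset.univ.filter (fun c' => phiE A s(u, v) c' = c₀),
      ((k : ℤ) - (Kc L (A.erase s(u, v)) c').card)
      = ((k : ℤ) - (Kc L (A.erase s(u, v))
          ((HA (A.erase s(u, v))).connectedComponentMk u)).card)
        + ((k : ℤ) - (Kc L (A.erase s(u, v))
          ((HA (A.erase s(u, v))).connectedComponentMk v)).card) := by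
    rw [fiber_pair huv hne hnuv, Finset.sum_pair (mkuv_ne huv hne hnuv)]
  rw [h2]
  have h3 : ((k : ℤ) - (Kc L A c₀).card)
      ≤ ((k : ℤ) - (Kc L (A.erase s(u, v))
          ((HA (A.erase s(u, v))).connectedComponentMk u)).card)
        + ((k : ℤ) - (Kc L (A.erase s(u, v))
          ((HA (A.erase s(u, v))).connectedComponentMk v)).card)
        + (alphaL L s(u, v) : ℤ) := by
    set Ku := Kc L (A.erase s(u, v)) ((HA (A.erase s(u, v))).connectedComponentMk u)
    set Kv := Kc L (A.erase s(u, v)) ((HA (A.erase s(u, v))).connectedComponentMk v)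
    have hKc : Kc L A c₀ = Ku ∩ Kv := Kc_pair_eq huv hne hnuv
    have hcui : (Ku ∪ Kv).card + (Ku ∩ Kv).card = Ku.card + Kv.card :=
      Finset.card_union_add_card_inter _ _
    have hsubu : Ku ⊆ L u := fun x hx => mem_Kc.mp hx u rfl
    have hsubv : Kv ⊆ L v := fun x hx => mem_Kc.mp hx v rfl
    have hun : (Ku ∪ Kv).card ≤ (L u ∪ L v).card :=
      Finset.card_le_card (Finset.union_subset_union hsubu hsubv)
    have hLuv : (L u ∪ L v).card + (L u ∩ L v).card = (L u).card + (L v).card :=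
      Finset.card_union_add_card_inter _ _
    have hsd := Finset.card_inter_add_card_sdiff (L u) (L v)
    rw [hL u] at hsd
    rw [hL u, hL v] at hLuv
    rw [hKc, alphaL_eq hL]
    push_cast
    omega
  linarith

lemma defect_le (hinj : Set.InjOn η G.edgeSet) {L : V → Finset ℕ} {k : ℕ}
    (hL : ∀ w, (L w).card = k) :
    ∀ A : Finset (Sym2 V), A ⊆ G.edgeFinset → ¬ Bad G η A →
      ∑ c : (HA A).ConnectedComponent, ((k : ℤ) - (Kc L A c).card)
        ≤ ∑ e ∈ A, (alphaL L e : ℤ) := by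
  intro A
  induction A using Finset.strongInduction with
  | _ A ih =>
    intro hA hnb
    rcases Finset.eq_empty_or_nonempty A with rfl | ⟨e, he⟩
    · rw [Finset.sum_empty]
      refine le_of_eq (Finset.sum_eq_zero ?_)
      intro c _
      rw [Kc_empty_card hL c]
      ring
    · induction e using Sym2.ind with
      | _ u v =>
        have hne : u ≠ v := by
          have := hA he
          rw [SimpleGraph.mem_edgeFinset, SimpleGraph.mem_edgeSet] at this
          exact this.ne
        have hnuv := not_reachable_erase hinj hA hnb he
        have hstep := defect_erase hL he hne hnuv
        have hih := ih (A.erase s(u, v)) (Finset.erase_ssubset he)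
          ((Finset.erase_subset _ _).trans hA)
          (fun hb => hnb (bad_mono (Finset.erase_subset _ _) hb))
        have hsum : ∑ e ∈ A.erase s(u, v), (alphaL L e : ℤ) + (alphaL L s(u, v) : ℤ)
            = ∑ e ∈ A, (alphaL L e : ℤ) := Finset.sum_erase_add A _ he
        linarith

end DZ
namespace DZ
open SimpleGraph Finset
open scoped Classical
variable {V : Type*} [Fintype V] [DecidableEq V]
variable {G : SimpleGraph V} [DecidableRel G.Adj] {η : Sym2 V → ℕ}

lemma prod_ge {ι : Type*} (s : Finset ι) (β : ι → ℕ) (k : ℕ) (hβ : ∀ i ∈ s, β i ≤ k) :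
    (k : ℤ) ^ s.card - ∏ i ∈ s, (β i : ℤ)
      ≤ (k : ℤ) ^ (s.card - 1) * ∑ i ∈ s, ((k : ℤ) - β i) := by
  induction s using Finset.induction with
  | empty => simp
  | @insert a s ha ih =>
    have hβa : (β a : ℤ) ≤ k := by exact_mod_cast hβ a (Finset.mem_insert_self a s)
    have hβs : ∀ i ∈ s, β i ≤ k := fun i hi => hβ i (Finset.mem_insert_of_mem hi)
    have ih' := ih hβs
    have hk0 : (0 : ℤ) ≤ (k : ℤ) := Int.natCast_nonneg k
    have hP : ∏ i ∈ s, (β i : ℤ) ≤ (k : ℤ) ^ s.card := by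
      calc ∏ i ∈ s, (β i : ℤ) ≤ ∏ _i ∈ s, (k : ℤ) :=
            Finset.prod_le_prod (fun i _ => Int.natCast_nonneg _)
              (fun i hi => by exact_mod_cast hβs i hi)
        _ = (k : ℤ) ^ s.card := by rw [Finset.prod_const]
    have hSig : (0 : ℤ) ≤ ∑ i ∈ s, ((k : ℤ) - β i) :=
      Finset.sum_nonneg (fun i hi => by
        have := hβs i hi; omega)
    rw [Finset.card_insert_of_notMem ha, Finset.prod_insert ha, Finset.sum_insert ha]
    have key1 : (k : ℤ) * ((k : ℤ) ^ (s.card - 1) * ∑ i ∈ s, ((k : ℤ) - β i))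
        ≤ (k : ℤ) ^ s.card * ∑ i ∈ s, ((k : ℤ) - β i) := by
      rcases Finset.eq_empty_or_nonempty s with rfl | hs
      · simp
      · have hc : 1 ≤ s.card := Finset.card_pos.mpr hs
        have : (k : ℤ) * (k : ℤ) ^ (s.card - 1) = (k : ℤ) ^ s.card := by
          rw [← pow_succ']
          congr 1
          omega
        rw [← mul_assoc, this]
    have key2 : ((k : ℤ) - β a) * ∏ i ∈ s, (β i : ℤ)
        ≤ ((k : ℤ) - β a) * (k : ℤ) ^ s.card :=
      mul_le_mul_of_nonneg_left hP (by omega)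
    have expand : (k : ℤ) ^ (s.card + 1) - (β a : ℤ) * ∏ i ∈ s, (β i : ℤ)
        = (k : ℤ) * ((k : ℤ) ^ s.card - ∏ i ∈ s, (β i : ℤ))
          + ((k : ℤ) - β a) * ∏ i ∈ s, (β i : ℤ) := by ring
    have final : (k : ℤ) ^ (s.card + 1 - 1) * (((k : ℤ) - β a) + ∑ i ∈ s, ((k : ℤ) - β i))
        = (k : ℤ) ^ s.card * ∑ i ∈ s, ((k : ℤ) - β i) + ((k : ℤ) - β a) * (k : ℤ) ^ s.card := by
      simp only [Nat.add_sub_cancel]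
      ring
    rw [expand, final]
    have step1 : (k : ℤ) * ((k : ℤ) ^ s.card - ∏ i ∈ s, (β i : ℤ))
        ≤ (k : ℤ) ^ s.card * ∑ i ∈ s, ((k : ℤ) - β i) :=
      le_trans (mul_le_mul_of_nonneg_left ih' hk0) key1
    linarith

section PerA
variable (hinj : Set.InjOn η G.edgeSet) {L : V → Finset ℕ} {k : ℕ}
  (hL : ∀ w, (L w).card = k) {A : Finset (Sym2 V)}
  (hA : A ⊆ G.edgeFinset) (hnb : ¬ Bad G η A)

include hinj hA hnb

lemma card_le_n (hne : A.Nonempty) : A.card + 1 ≤ Fintype.card V := by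
  have h1 := ncomp_add_card hinj A hA hnb
  have h2 : 1 ≤ ncomp A := by
    obtain ⟨e, he⟩ := hne
    have hv : Nonempty V := by
      induction e using Sym2.ind with
      | _ u v => exact ⟨u⟩
    obtain ⟨u⟩ := hv
    exact Fintype.card_pos_iff.mpr ⟨(HA A).connectedComponentMk u⟩
  omega

include hL

lemma nct_upper :
    (k : ℤ) ^ (Fintype.card V - A.card) - (Nct L A : ℤ)
      ≤ (k : ℤ) ^ (Fintype.card V - A.card - 1) * ∑ e ∈ A, (alphaL L e : ℤ) := by
  have h1 := ncomp_add_card hinj A hA hnb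
  have h1' : Fintype.card (HA A).ConnectedComponent + A.card = Fintype.card V := h1
  have hcardcc : (Finset.univ : Finset (HA A).ConnectedComponent).card
      = Fintype.card V - A.card := by
    rw [Finset.card_univ]; omega
  have h2 : (Nct L A : ℤ) = ∏ c : (HA A).ConnectedComponent, ((Kc L A c).card : ℤ) := by
    rw [Nct_eq_prod]; push_cast; ring
  have h3 := prod_ge Finset.univ (fun c => (Kc L A c).card) k
    (fun c _ => Kc_card_le hL c)
  rw [hcardcc] at h3
  have h4 := defect_le hinj hL A hA hnb
  have h5 : (0 : ℤ) ≤ (k : ℤ) ^ (Fintype.card V - A.card - 1) :=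
    pow_nonneg (Int.natCast_nonneg k) _
  calc (k : ℤ) ^ (Fintype.card V - A.card) - (Nct L A : ℤ)
      ≤ (k : ℤ) ^ (Fintype.card V - A.card - 1)
          * ∑ c : (HA A).ConnectedComponent, ((k : ℤ) - (Kc L A c).card) := by
        rw [h2]; exact h3
    _ ≤ (k : ℤ) ^ (Fintype.card V - A.card - 1) * ∑ e ∈ A, (alphaL L e : ℤ) :=
        mul_le_mul_of_nonneg_left h4 h5

lemma nct_lower {a b : V} (hab : s(a, b) ∈ A) :
    (alphaL L s(a, b) : ℤ) * (k : ℤ) ^ (Fintype.card V - A.card - 1)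
      ≤ (k : ℤ) ^ (Fintype.card V - A.card) - (Nct L A : ℤ) := by
  have hne : a ≠ b := by
    have := hA hab
    rw [SimpleGraph.mem_edgeFinset, SimpleGraph.mem_edgeSet] at this
    exact this.ne
  have h1 := ncomp_add_card hinj A hA hnb
  have hccpos : 1 ≤ ncomp A :=
    Fintype.card_pos_iff.mpr ⟨(HA A).connectedComponentMk a⟩
  -- Nct ≤ (k - α) * k^(ncomp - 1) in ℕ
  have hKa := Kc_card_add_alpha hL hab hne
  have hprod : Nct L A ≤ (k - alphaL L s(a, b)) * k ^ (ncomp A - 1) := by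
    rw [Nct_eq_prod]
    have hsplit : ∏ c : (HA A).ConnectedComponent, (Kc L A c).card
        = (Kc L A ((HA A).connectedComponentMk a)).card
          * ∏ c ∈ Finset.univ.erase ((HA A).connectedComponentMk a), (Kc L A c).card :=
      (Finset.mul_prod_erase _ _ (Finset.mem_univ _)).symm
    rw [hsplit]
    have hb1 : (Kc L A ((HA A).connectedComponentMk a)).card ≤ k - alphaL L s(a, b) := by
      omega
    have hb2 : ∏ c ∈ Finset.univ.erase ((HA A).connectedComponentMk a), (Kc L A c).card
        ≤ k ^ (ncomp A - 1) := by
      calc ∏ c ∈ Finset.univ.erase ((HA A).connectedComponentMk a), (Kc L A c).card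
          ≤ ∏ _c ∈ Finset.univ.erase ((HA A).connectedComponentMk a), k :=
            Finset.prod_le_prod' (fun c _ => Kc_card_le hL c)
        _ = k ^ (ncomp A - 1) := by
            rw [Finset.prod_const, Finset.card_erase_of_mem (Finset.mem_univ _),
              Finset.card_univ, ncomp]
    exact Nat.mul_le_mul hb1 hb2
  have halk : alphaL L s(a, b) ≤ k := by omega
  have hnc : ncomp A = Fintype.card V - A.card := by omega
  have hnc1 : 1 ≤ Fintype.card V - A.card := by omega
  have hpow : (k : ℤ) ^ (Fintype.card V - A.card)
      = (k : ℤ) * (k : ℤ) ^ (Fintype.card V - A.card - 1) := by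
    rw [← pow_succ']
    congr 1
    omega
  have hnct : (Nct L A : ℤ) ≤ ((k : ℤ) - alphaL L s(a, b)) * (k : ℤ) ^ (Fintype.card V - A.card - 1) := by
    have := hprod
    rw [hnc] at this
    calc (Nct L A : ℤ) ≤ ((k - alphaL L s(a, b)) * k ^ (Fintype.card V - A.card - 1) : ℕ) := by
          exact_mod_cast this
      _ = ((k : ℤ) - alphaL L s(a, b)) * (k : ℤ) ^ (Fintype.card V - A.card - 1) := by
          push_cast [halk]
          ring
  rw [hpow]
  linarith

end PerA

end DZ
namespace DZ
open SimpleGraph Finset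
open scoped Classical
variable {V : Type*} [Fintype V] [DecidableEq V]
variable {G : SimpleGraph V} [DecidableRel G.Adj] {η : Sym2 V → ℕ}

lemma NBe_eq (i : ℕ) (e : Sym2 V) :
    (NBe G η i e : ℕ)
      = ((G.edgeFinset.powerset.filter (fun A => ¬ Bad G η A)).filter
          (fun A => A.card = i ∧ e ∈ A)).card := by
  rw [NBe, ← Set.ncard_coe_finset]
  congr 1
  ext A
  rw [Set.mem_setOf_eq, Finset.mem_coe, Finset.mem_filter, Finset.mem_filter,
    Finset.mem_powerset, NBset, Set.mem_setOf_eq, Bad]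
  constructor
  · rintro ⟨⟨h1, h2, h3⟩, h4⟩
    refine ⟨⟨?_, ?_⟩, h2, h4⟩
    · intro f hf
      rw [SimpleGraph.mem_edgeFinset]
      exact h1 hf
    · rintro ⟨B, hB, hBA⟩
      exact h3 B hB hBA
  · rintro ⟨⟨h1, h2⟩, h3, h4⟩
    refine ⟨⟨?_, h3, ?_⟩, h4⟩
    · intro f hf
      have := h1 hf
      rwa [SimpleGraph.mem_edgeFinset] at this
    · intro B hB hBA
      exact h2 ⟨B, hB, hBA⟩

lemma Nct_kappa (hinj : Set.InjOn η G.edgeSet) {k : ℕ} {A : Finset (Sym2 V)}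
    (hA : A ⊆ G.edgeFinset) (hnb : ¬ Bad G η A) :
    Nct (fun _ : V => Finset.Icc 1 k) A = k ^ (Fintype.card V - A.card) := by
  rw [Nct_const k A]
  congr 1
  have := ncomp_add_card hinj A hA hnb
  omega

end DZ
namespace DZ
open SimpleGraph Finset
open scoped Classical
variable {V : Type*} [Fintype V] [DecidableEq V]
variable {G : SimpleGraph V} [DecidableRel G.Adj] {η : Sym2 V → ℕ}

lemma nct_lower_e (hinj : Set.InjOn η G.edgeSet) {L : V → Finset ℕ} {k : ℕ}
    (hL : ∀ w, (L w).card = k) {A : Finset (Sym2 V)}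
    (hA : A ⊆ G.edgeFinset) (hnb : ¬ Bad G η A) {e : Sym2 V} (he : e ∈ A) :
    (alphaL L e : ℤ) * (k : ℤ) ^ (Fintype.card V - A.card - 1)
      ≤ (k : ℤ) ^ (Fintype.card V - A.card) - (Nct L A : ℤ) := by
  induction e using Sym2.ind with
  | _ a b => exact nct_lower hinj hL hA hnb he

theorem main (G : SimpleGraph V) [DecidableRel G.Adj] (η : Sym2 V → ℕ)
    (hinj : Set.InjOn η G.edgeSet) (k : ℕ) (hk : 2 ≤ k)
    (L : V → Finset ℕ) (hL : ∀ v, (L v).card = k) :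
    (listCol G L : ℝ) - (propCol G k : ℝ) ≥
      1 / (k : ℝ) * ∑ e ∈ G.edgeFinset, (alphaL L e : ℝ) * Qeta G η e (k : ℝ) := by
  set n := Fintype.card V with hn
  set SNB := G.edgeFinset.powerset.filter (fun A => ¬ Bad G η A) with hSNB
  have hmem : ∀ A ∈ SNB, A ⊆ G.edgeFinset ∧ ¬ Bad G η A := by
    intro A hA
    obtain ⟨h1, h2⟩ := Finset.mem_filter.mp hA
    exact ⟨Finset.mem_powerset.mp h1, h2⟩
  have hkR : (0 : ℝ) < (k : ℝ) := by
    have : 0 < k := by omega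
    exact_mod_cast this
  set F : Finset (Sym2 V) → ℝ := fun A =>
    if Odd A.card then
      (∑ e ∈ A, (alphaL L e : ℝ)) / A.card * (k : ℝ) ^ (n - A.card - 1)
    else -((∑ e ∈ A, (alphaL L e : ℝ)) * (k : ℝ) ^ (n - A.card - 1)) with hF
  -- Step 1 : LHS identity
  have hLHS : (listCol G L : ℝ) - (propCol G k : ℝ)
      = ∑ A ∈ SNB, (-1 : ℝ) ^ A.card * ((Nct L A : ℝ) - (k : ℝ) ^ (n - A.card)) := by
    have h1 := listCol_nb_expansion (G := G) (η := η) hinj L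
    have h2 := listCol_nb_expansion (G := G) (η := η) hinj (fun _ => Finset.Icc 1 k)
    have h4 : (listCol G L : ℤ) - (propCol G k : ℤ)
        = ∑ A ∈ SNB, (-1) ^ A.card * ((Nct L A : ℤ) - ((k ^ (n - A.card) : ℕ) : ℤ)) := by
      rw [h1, propCol_eq_listCol, h2, ← Finset.sum_sub_distrib]
      refine Finset.sum_congr rfl ?_
      intro A hA
      rw [Nct_kappa hinj (hmem A hA).1 (hmem A hA).2]
      ring
    have h5 := congrArg (fun z : ℤ => (z : ℝ)) h4
    push_cast at h5
    convert h5 using 1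
  -- Step 2 : termwise bound
  have hterm : ∀ A ∈ SNB, F A ≤ (-1 : ℝ) ^ A.card * ((Nct L A : ℝ) - (k : ℝ) ^ (n - A.card)) := by
    intro A hA
    obtain ⟨hA1, hA2⟩ := hmem A hA
    simp only [hF]
    by_cases hodd : Odd A.card
    · rw [if_pos hodd, Odd.neg_one_pow hodd]
      have hcpos : 0 < A.card := Nat.pos_of_ne_zero (by
        intro h; rw [h] at hodd; simp at hodd)
      have hZ : ∑ e ∈ A, ((alphaL L e : ℤ) * (k : ℤ) ^ (n - A.card - 1))
          ≤ (A.card : ℤ) * ((k : ℤ) ^ (n - A.card) - (Nct L A : ℤ)) := by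
        calc ∑ e ∈ A, ((alphaL L e : ℤ) * (k : ℤ) ^ (n - A.card - 1))
            ≤ ∑ _e ∈ A, ((k : ℤ) ^ (n - A.card) - (Nct L A : ℤ)) :=
              Finset.sum_le_sum (fun e he => nct_lower_e hinj hL hA1 hA2 he)
          _ = (A.card : ℤ) * ((k : ℤ) ^ (n - A.card) - (Nct L A : ℤ)) := by
              rw [Finset.sum_const, nsmul_eq_mul]
      have hZR : ∑ e ∈ A, ((alphaL L e : ℝ) * (k : ℝ) ^ (n - A.card - 1))
          ≤ (A.card : ℝ) * ((k : ℝ) ^ (n - A.card) - (Nct L A : ℝ)) := by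
        exact_mod_cast hZ
      have hcR : (0 : ℝ) < (A.card : ℝ) := by exact_mod_cast hcpos
      rw [div_mul_eq_mul_div, div_le_iff₀ hcR]
      calc (∑ e ∈ A, (alphaL L e : ℝ)) * (k : ℝ) ^ (n - A.card - 1)
          = ∑ e ∈ A, ((alphaL L e : ℝ) * (k : ℝ) ^ (n - A.card - 1)) := by
            rw [Finset.sum_mul]
        _ ≤ (A.card : ℝ) * ((k : ℝ) ^ (n - A.card) - (Nct L A : ℝ)) := hZR
        _ = -1 * ((Nct L A : ℝ) - (k : ℝ) ^ (n - A.card)) * (A.card : ℝ) := by ring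
    · rw [if_neg hodd, Even.neg_one_pow (Nat.not_odd_iff_even.mp hodd), one_mul]
      have hZ := nct_upper hinj hL hA1 hA2
      have hZR : (k : ℝ) ^ (n - A.card) - (Nct L A : ℝ)
          ≤ (k : ℝ) ^ (n - A.card - 1) * ∑ e ∈ A, (alphaL L e : ℝ) := by
        exact_mod_cast hZ
      linarith
  -- Step 3 : RHS identity
  have hQ : ∀ e : Sym2 V, Qeta G η e (k : ℝ)
      = ∑ i ∈ Finset.Icc 1 (n - 1),
          (if Odd i then (NBe G η i e : ℝ) / i * (k : ℝ) ^ (n - i)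
           else -((NBe G η i e : ℝ) * (k : ℝ) ^ (n - i))) := by
    intro e
    rw [Qeta, ← hn]
    have heven : (Finset.Icc 2 (n - 1)).filter (fun i => Even i)
        = (Finset.Icc 1 (n - 1)).filter (fun i => Even i) := by
      ext i
      simp only [Finset.mem_filter, Finset.mem_Icc, Nat.even_iff]
      omega
    rw [heven, Finset.sum_filter, Finset.sum_filter, ← Finset.sum_sub_distrib]
    refine Finset.sum_congr rfl (fun i _ => ?_)
    by_cases h : Odd i
    · have h2 : ¬ Even i := fun he => (Nat.not_odd_iff_even.mpr he) h
      rw [if_pos h, if_pos h, if_neg h2, sub_zero]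
    · rw [if_neg h, if_pos (Nat.not_odd_iff_even.mp h), if_neg h, zero_sub]
  have hNBe : ∀ (i : ℕ) (e : Sym2 V), (NBe G η i e : ℝ)
      = ∑ A ∈ SNB, (if A.card = i ∧ e ∈ A then (1 : ℝ) else 0) := by
    intro i e
    rw [NBe_eq (G := G) (η := η) i e, Finset.card_filter]
    push_cast
    rfl
  have hB2 : ∀ i : ℕ, ∑ e ∈ G.edgeFinset, (alphaL L e : ℝ) * (NBe G η i e : ℝ)
      = ∑ A ∈ SNB.filter (fun A => A.card = i), ∑ e ∈ A, (alphaL L e : ℝ) := by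
    intro i
    calc ∑ e ∈ G.edgeFinset, (alphaL L e : ℝ) * (NBe G η i e : ℝ)
        = ∑ e ∈ G.edgeFinset, ∑ A ∈ SNB,
            (if A.card = i ∧ e ∈ A then (alphaL L e : ℝ) else 0) := by
          refine Finset.sum_congr rfl (fun e _ => ?_)
          rw [hNBe i e, Finset.mul_sum]
          refine Finset.sum_congr rfl (fun A _ => ?_)
          rw [mul_ite, mul_one, mul_zero]
      _ = ∑ A ∈ SNB, ∑ e ∈ G.edgeFinset,
            (if A.card = i ∧ e ∈ A then (alphaL L e : ℝ) else 0) := Finset.sum_comm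
      _ = ∑ A ∈ SNB, (if A.card = i then ∑ e ∈ A, (alphaL L e : ℝ) else 0) := by
          refine Finset.sum_congr rfl (fun A hA => ?_)
          by_cases hc : A.card = i
          · rw [if_pos hc]
            have hfil : G.edgeFinset.filter (fun e => A.card = i ∧ e ∈ A) = A := by
              ext e
              simp only [Finset.mem_filter]
              constructor
              · rintro ⟨-, -, h⟩; exact h
              · intro h; exact ⟨(hmem A hA).1 h, hc, h⟩
            rw [← Finset.sum_filter, hfil]
          · rw [if_neg hc]
            exact Finset.sum_eq_zero (fun e he => if_neg (by tauto))
      _ = ∑ A ∈ SNB.filter (fun A => A.card = i), ∑ e ∈ A, (alphaL L e : ℝ) :=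
          (Finset.sum_filter _ _).symm
  set g : Finset (Sym2 V) → ℝ := fun A =>
    if Odd A.card then (∑ e ∈ A, (alphaL L e : ℝ)) / A.card * (k : ℝ) ^ (n - A.card)
    else -((∑ e ∈ A, (alphaL L e : ℝ)) * (k : ℝ) ^ (n - A.card)) with hg
  have hRHS1 : ∑ e ∈ G.edgeFinset, (alphaL L e : ℝ) * Qeta G η e (k : ℝ)
      = ∑ A ∈ SNB.filter (fun A => A.card ∈ Finset.Icc 1 (n - 1)), g A := by
    calc ∑ e ∈ G.edgeFinset, (alphaL L e : ℝ) * Qeta G η e (k : ℝ)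
        = ∑ e ∈ G.edgeFinset, ∑ i ∈ Finset.Icc 1 (n - 1), (alphaL L e : ℝ) *
            (if Odd i then (NBe G η i e : ℝ) / i * (k : ℝ) ^ (n - i)
             else -((NBe G η i e : ℝ) * (k : ℝ) ^ (n - i))) := by
          refine Finset.sum_congr rfl (fun e _ => ?_)
          rw [hQ e, Finset.mul_sum]
      _ = ∑ i ∈ Finset.Icc 1 (n - 1), ∑ e ∈ G.edgeFinset, (alphaL L e : ℝ) *
            (if Odd i then (NBe G η i e : ℝ) / i * (k : ℝ) ^ (n - i)
             else -((NBe G η i e : ℝ) * (k : ℝ) ^ (n - i))) := Finset.sum_comm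
      _ = ∑ i ∈ Finset.Icc 1 (n - 1), ∑ A ∈ SNB.filter (fun A => A.card = i), g A := by
          refine Finset.sum_congr rfl (fun i _ => ?_)
          by_cases h : Odd i
          · have hcast : ∀ e, (alphaL L e : ℝ) *
                ((NBe G η i e : ℝ) / i * (k : ℝ) ^ (n - i))
                = ((alphaL L e : ℝ) * (NBe G η i e : ℝ)) * ((k : ℝ) ^ (n - i) / i) := by
              intro e; ring
            simp only [if_pos h]
            rw [Finset.sum_congr rfl (fun e _ => hcast e), ← Finset.sum_mul, hB2 i]
            rw [Finset.sum_mul]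
            refine Finset.sum_congr rfl (fun A hA => ?_)
            have hc : A.card = i := (Finset.mem_filter.mp hA).2
            simp only [hg]
            simp only [hc, if_pos h]
            ring
          · have hcast : ∀ e, (alphaL L e : ℝ) *
                (-((NBe G η i e : ℝ) * (k : ℝ) ^ (n - i)))
                = ((alphaL L e : ℝ) * (NBe G η i e : ℝ)) * (-(k : ℝ) ^ (n - i)) := by
              intro e; ring
            simp only [if_neg h]
            rw [Finset.sum_congr rfl (fun e _ => hcast e), ← Finset.sum_mul, hB2 i]
            rw [Finset.sum_mul]
            refine Finset.sum_congr rfl (fun A hA => ?_)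
            have hc : A.card = i := (Finset.mem_filter.mp hA).2
            simp only [hg]
            simp only [hc, if_neg h]
            ring
      _ = ∑ A ∈ SNB.filter (fun A => A.card ∈ Finset.Icc 1 (n - 1)), g A := by
          rw [← Finset.sum_fiberwise_of_maps_to
            (g := Finset.card) (t := Finset.Icc 1 (n - 1))
            (fun A hA => (Finset.mem_filter.mp hA).2) g]
          refine Finset.sum_congr rfl (fun i hi => ?_)
          congr 1
          ext A
          simp only [Finset.mem_filter]
          constructor
          · rintro ⟨h1, h2⟩; exact ⟨⟨h1, h2 ▸ hi⟩, h2⟩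
          · rintro ⟨⟨h1, -⟩, h2⟩; exact ⟨h1, h2⟩
  have hRHS : 1 / (k : ℝ) * ∑ e ∈ G.edgeFinset, (alphaL L e : ℝ) * Qeta G η e (k : ℝ)
      = ∑ A ∈ SNB, F A := by
    rw [hRHS1, Finset.sum_filter, Finset.mul_sum]
    refine Finset.sum_congr rfl (fun A hA => ?_)
    rcases Finset.eq_empty_or_nonempty A with rfl | hne
    · rw [if_neg (by simp)]
      simp [hF]
    · have hc1 : 1 ≤ A.card := Finset.card_pos.mpr hne
      have hcn := card_le_n hinj (hmem A hA).1 (hmem A hA).2 hne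
      have hicc : A.card ∈ Finset.Icc 1 (n - 1) := by
        rw [Finset.mem_Icc]
        omega
      rw [if_pos hicc]
      simp only [hg, hF]
      have hpow : (k : ℝ) ^ (n - A.card) = (k : ℝ) * (k : ℝ) ^ (n - A.card - 1) := by
        rw [← pow_succ']
        congr 1
        omega
      by_cases h : Odd A.card
      · rw [if_pos h, if_pos h, hpow]
        field_simp
      · rw [if_neg h, if_neg h, hpow]
        field_simp
  rw [ge_iff_le, hRHS, hLHS]
  exact Finset.sum_le_sum hterm

end DZ
theorem stmt18 [Fintype V] [DecidableEq V] (G : SimpleGraph V) [DecidableRel G.Adj]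
    (n m k : ℕ) (hn : n = Fintype.card V) (hm : m = G.edgeFinset.card)
    (η : Sym2 V → ℕ) (hη : Set.BijOn η G.edgeSet (Set.Icc 1 m))
    (hk : 2 ≤ k) (L : V → Finset ℕ) (hL : ∀ v, (L v).card = k) :
    (listCol G L : ℝ) - (propCol G k : ℝ) ≥
      1 / (k : ℝ) * ∑ e ∈ G.edgeFinset, (alphaL L e : ℝ) * Qeta G η e (k : ℝ) := by
  exact DZ.main G η hη.injOn k hk L hL
end

section
/- Let G = (V,E) be a simple graph with n vertices and m edges, fix a bijection η : E → {1,…,m}, and let L be an assignment of finite color sets to the vertices of G. Then P(G,L) = Σ_{i=0}^{n−1} (−1)^i Σ_{{T₁,…,T_{n−i}} ∈ NBF_i(G)} ∏_{j=1}^{n−i} β(T_j), where the inner sum is over spanning forests of G whose edge set contains no broken cycle and has exactly i edges, with components T₁, …, T_{n−i}. -/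
open Finset

variable {V : Type*}

section BrokenCycleHelpers
set_option linter.unusedSectionVars false
set_option linter.unusedVariables false
open SimpleGraph

lemma reach_of_adj_reach {H₁ H₂ : SimpleGraph V}
    (h : ∀ a b, H₁.Adj a b → H₂.Reachable a b) {a b : V} (hr : H₁.Reachable a b) :
    H₂.Reachable a b := by
  obtain ⟨p⟩ := hr
  induction p with
  | nil => exact Reachable.refl _
  | cons hadj p ih => exact (h _ _ hadj).trans ih

lemma betaProd_congr (L : V → Finset ℕ) {H₁ H₂ : SimpleGraph V}
    (h : ∀ a b : V, H₁.Reachable a b ↔ H₂.Reachable a b) :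
    betaProd L H₁ = betaProd L H₂ := by
  have key : ∀ v w : V, H₁.connectedComponentMk v = H₁.connectedComponentMk w ↔
      H₂.connectedComponentMk v = H₂.connectedComponentMk w := by
    intro v w
    rw [ConnectedComponent.eq, ConnectedComponent.eq, h]
  refine finprod_eq_of_bijective
    (ConnectedComponent.lift (fun v => H₂.connectedComponentMk v)
      (fun v w p _ => (key v w).1 (ConnectedComponent.eq.2 p.reachable)))
    ⟨?_, ?_⟩ ?_
  · intro c d
    refine ConnectedComponent.ind₂ (fun v w hvw => ?_) c d
    simp only [ConnectedComponent.lift_mk] at hvw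
    exact (key v w).2 hvw
  · intro d
    refine ConnectedComponent.ind (fun w => ?_) d
    exact ⟨H₁.connectedComponentMk w, rfl⟩
  · intro c
    refine ConnectedComponent.ind (fun v => ?_) c
    simp only [ConnectedComponent.lift_mk]
    unfold betaComp
    congr 1
    ext x
    simp only [Set.mem_setOf_eq]
    constructor
    · intro hx w hw
      exact hx w ((key w v).2 hw)
    · intro hx w hw
      exact hx w ((key w v).1 hw)


lemma mem_finset_inf' {α : Type*} {s : Finset α} (hs : s.Nonempty) (f : α → Finset ℕ) (x : ℕ) :
    x ∈ s.inf' hs f ↔ ∀ i ∈ s, x ∈ f i := by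
  rw [← Finset.singleton_subset_iff, ← Finset.le_iff_subset, Finset.le_inf'_iff]
  simp [Finset.singleton_subset_iff]

lemma count_const [Fintype V] [DecidableEq V] (L : V → Finset ℕ) (H : SimpleGraph V)
    [DecidablePred fun f : V → ℕ => ∀ a b : V,
      H.connectedComponentMk a = H.connectedComponentMk b → f a = f b] :
    ((Fintype.piFinset L).filter fun f : V → ℕ => ∀ a b : V,
        H.connectedComponentMk a = H.connectedComponentMk b → f a = f b).card
      = betaProd L H := by
  classical
  haveI : Fintype H.ConnectedComponent := Fintype.ofFinite _
  have hne : ∀ c : H.ConnectedComponent,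
      (Finset.univ.filter fun w => H.connectedComponentMk w = c).Nonempty := by
    refine ConnectedComponent.ind (fun v => ⟨v, ?_⟩)
    simp only [Finset.mem_filter, Finset.mem_univ, true_and]
  set T : H.ConnectedComponent → Finset ℕ :=
    fun c => (Finset.univ.filter fun w => H.connectedComponentMk w = c).inf' (hne c) L with hT
  have hmemT : ∀ (c) (x : ℕ), x ∈ T c ↔ ∀ w : V, H.connectedComponentMk w = c → x ∈ L w := by
    intro c x
    rw [hT, mem_finset_inf']
    simp
  have hbeta : ∀ c, betaComp L H c = (T c).card := by
    intro c
    rw [betaComp, ← Set.ncard_coe_finset]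
    congr 1
    ext x
    simp only [Finset.coe_filter, Set.mem_setOf_eq, Finset.mem_coe, hmemT]
  have hout : ∀ c : H.ConnectedComponent, H.connectedComponentMk c.out = c := fun c => c.out_eq
  rw [betaProd, finprod_eq_prod_of_fintype]
  have hcard : ((Fintype.piFinset L).filter fun f => ∀ a b : V,
        H.connectedComponentMk a = H.connectedComponentMk b → f a = f b).card
      = (Fintype.piFinset T).card := by
    refine Finset.card_bij' (fun f _ => fun c => f c.out)
      (fun g _ => fun w => g (H.connectedComponentMk w)) ?_ ?_ ?_ ?_
    · intro f hf
      rw [Finset.mem_filter, Fintype.mem_piFinset] at hf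
      rw [Fintype.mem_piFinset]
      intro c
      rw [hmemT]
      intro w hw
      rw [hf.2 c.out w (by rw [hout, hw])]
      exact hf.1 w
    · intro g hg
      rw [Fintype.mem_piFinset] at hg
      rw [Finset.mem_filter, Fintype.mem_piFinset]
      refine ⟨fun v => (hmemT _ _).1 (hg _) v rfl, fun a b hab => by dsimp only; rw [hab]⟩
    · intro f hf
      dsimp only
      rw [Finset.mem_filter] at hf
      funext w
      exact hf.2 _ _ (hout _)
    · intro g hg
      dsimp only
      funext c
      rw [hout]
  rw [hcard, Fintype.card_piFinset]
  exact Finset.prod_congr rfl fun c _ => (hbeta c).symm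


/-- the edge `e` is monochromatic under `f`. -/
def monoEdge (f : V → ℕ) (e : Sym2 V) : Prop := ∀ a ∈ e, ∀ b ∈ e, f a = f b

lemma monoEdge_mk {f : V → ℕ} {a b : V} : monoEdge f s(a, b) ↔ f a = f b := by
  constructor
  · intro h
    exact h a (by simp) b (by simp)
  · intro h x hx y hy
    rw [Sym2.mem_iff] at hx hy
    rcases hx with rfl | rfl <;> rcases hy with rfl | rfl <;> first | rfl | exact h | exact h.symm

lemma partA [Fintype V] [DecidableEq V] (G : SimpleGraph V) [DecidableRel G.Adj]
    (L : V → Finset ℕ) :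
    (listCol G L : ℤ) =
      ∑ A ∈ G.edgeFinset.powerset, (-1 : ℤ) ^ A.card *
        (betaProd L (SimpleGraph.fromEdgeSet (↑A : Set (Sym2 V))) : ℤ) := by
  classical
  set mono : (V → ℕ) → Finset (Sym2 V) := fun f => G.edgeFinset.filter (monoEdge f) with hmono
  -- Step 1 : listCol as a finset card
  have h1 : listCol G L = ((Fintype.piFinset L).filter fun f => mono f = ∅).card := by
    rw [listCol, ← Set.ncard_coe_finset]
    congr 1
    ext f
    simp only [Set.mem_setOf_eq, Finset.coe_filter, Fintype.mem_piFinset, Set.mem_setOf_eq]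
    constructor
    · rintro ⟨hf, hp⟩
      refine ⟨hf, Finset.filter_eq_empty_iff.2 ?_⟩
      intro e he
      induction e with
      | h a b =>
        rw [SimpleGraph.mem_edgeFinset, SimpleGraph.mem_edgeSet] at he
        rw [monoEdge_mk]
        exact hp he
    · rintro ⟨hf, hp⟩
      refine ⟨hf, fun a b hab hfab => ?_⟩
      rw [hmono] at hp
      rw [Finset.filter_eq_empty_iff] at hp
      exact hp (by simpa using hab) (monoEdge_mk.2 hfab)
  -- Step 2 : inclusion-exclusion
  have h2 : ∀ f, f ∈ Fintype.piFinset L → mono f ⊆ G.edgeFinset :=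
    fun f _ => Finset.filter_subset _ _
  have key : ((( Fintype.piFinset L).filter fun f => mono f = ∅).card : ℤ)
      = ∑ A ∈ G.edgeFinset.powerset, (-1 : ℤ) ^ A.card *
          (((Fintype.piFinset L).filter fun f => A ⊆ mono f).card : ℤ) := by
    have swap : ∀ f ∈ Fintype.piFinset L,
        (if mono f = ∅ then (1 : ℤ) else 0)
          = ∑ A ∈ G.edgeFinset.powerset, if A ⊆ mono f then (-1 : ℤ) ^ A.card else 0 := by
      intro f hf
      have hpows : G.edgeFinset.powerset.filter (· ⊆ mono f) = (mono f).powerset := by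
        ext A
        simp only [Finset.mem_filter, Finset.mem_powerset]
        exact ⟨fun h => h.2, fun h => ⟨h.trans (h2 f hf), h⟩⟩
      rw [Finset.sum_ite, Finset.sum_const_zero, add_zero, hpows,
        Finset.sum_powerset_neg_one_pow_card]
    calc ((( Fintype.piFinset L).filter fun f => mono f = ∅).card : ℤ)
        = ∑ f ∈ Fintype.piFinset L, (if mono f = ∅ then (1 : ℤ) else 0) := by
          rw [Finset.sum_boole]
      _ = ∑ f ∈ Fintype.piFinset L, ∑ A ∈ G.edgeFinset.powerset,
            (if A ⊆ mono f then (-1 : ℤ) ^ A.card else 0) := Finset.sum_congr rfl swap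
      _ = ∑ A ∈ G.edgeFinset.powerset, ∑ f ∈ Fintype.piFinset L,
            (if A ⊆ mono f then (-1 : ℤ) ^ A.card else 0) := Finset.sum_comm
      _ = ∑ A ∈ G.edgeFinset.powerset, (-1 : ℤ) ^ A.card *
          (((Fintype.piFinset L).filter fun f => A ⊆ mono f).card : ℤ) := by
          refine Finset.sum_congr rfl fun A _ => ?_
          rw [Finset.sum_ite, Finset.sum_const_zero, add_zero, Finset.sum_const, nsmul_eq_mul,
            mul_comm]
  -- Step 3 : the fiber count
  have h3 : ∀ A ∈ G.edgeFinset.powerset,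
      (((Fintype.piFinset L).filter fun f => A ⊆ mono f).card : ℤ)
        = (betaProd L (SimpleGraph.fromEdgeSet (↑A : Set (Sym2 V))) : ℤ) := by
    intro A hA
    rw [Finset.mem_powerset] at hA
    set H : SimpleGraph V := SimpleGraph.fromEdgeSet (↑A : Set (Sym2 V)) with hH
    have hAdj : ∀ a b : V, H.Adj a b ↔ s(a, b) ∈ A ∧ a ≠ b := by
      intro a b; rw [hH, SimpleGraph.fromEdgeSet_adj]; simp
    have hiff : ∀ f ∈ Fintype.piFinset L, (A ⊆ mono f ↔ ∀ a b : V,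
        H.connectedComponentMk a = H.connectedComponentMk b → f a = f b) := by
      intro f hfL
      constructor
      · intro hsub a b hab
        rw [ConnectedComponent.eq] at hab
        obtain ⟨p⟩ := hab
        induction p with
        | nil => rfl
        | cons h p ih =>
          rename_i x y z
          have hxy : s(x, y) ∈ A := ((hAdj x y).1 h).1
          have := hsub hxy
          rw [hmono, Finset.mem_filter] at this
          exact (monoEdge_mk.1 this.2).trans ih
      · intro hc e he
        rw [hmono, Finset.mem_filter]
        refine ⟨hA he, ?_⟩
        induction e with
        | h a b =>
          refine monoEdge_mk.2 ?_
          by_cases hab : a = b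
          · rw [hab]
          · exact hc a b (ConnectedComponent.eq.2 ((hAdj a b).2 ⟨he, hab⟩).reachable)
    rw [Finset.filter_congr hiff, count_const]
  rw [h1, key]
  exact Finset.sum_congr rfl fun A hA => by rw [h3 A hA]


lemma partC [Fintype V] [DecidableEq V] [Nonempty V] (G : SimpleGraph V)
    (η : Sym2 V → ℕ) (hinj : Set.InjOn η G.edgeSet)
    (A : Finset (Sym2 V)) (hsub : ↑A ⊆ G.edgeSet)
    (hgood : ∀ B : Finset (Sym2 V), IsBrokenCycle G η B → ¬ B ⊆ A) :
    A.card < Fintype.card V := by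
  classical
  have main : ∀ A : Finset (Sym2 V), ↑A ⊆ G.edgeSet →
      (∀ B : Finset (Sym2 V), IsBrokenCycle G η B → ¬ B ⊆ A) →
      A.card + Nat.card (SimpleGraph.fromEdgeSet (↑A : Set (Sym2 V))).ConnectedComponent
        ≤ Fintype.card V := by
    intro A
    induction A using Finset.strongInduction with
    | _ A ih =>
      intro hsub hgood
      rcases A.eq_empty_or_nonempty with rfl | hAne
      · -- base case : the empty graph
        have hbot : Nat.card (SimpleGraph.fromEdgeSet
            (↑(∅ : Finset (Sym2 V)) : Set (Sym2 V))).ConnectedComponent = Fintype.card V := by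
          rw [show ((↑(∅ : Finset (Sym2 V)) : Set (Sym2 V))) = (∅ : Set (Sym2 V)) by simp,
            SimpleGraph.fromEdgeSet_empty]
          rw [← Nat.card_eq_fintype_card]
          refine (Nat.card_eq_of_bijective
            (fun v => (⊥ : SimpleGraph V).connectedComponentMk v) ⟨?_, ?_⟩).symm
          · intro x y hxy
            exact SimpleGraph.reachable_bot.1 (ConnectedComponent.exact hxy)
          · exact ConnectedComponent.ind (fun v => ⟨v, rfl⟩)
        rw [Finset.card_empty, hbot]
        omega
      · -- pick the edge with minimal η
        obtain ⟨e, heA, hemin⟩ := A.exists_min_image η hAne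
        obtain ⟨a, b, rfl⟩ : ∃ x y : V, e = s(x, y) := ⟨e.out.1, e.out.2, by rw [Sym2.mk, e.out_eq]⟩
        have hGadj : G.Adj a b := (SimpleGraph.mem_edgeSet G).1 (hsub heA)
        set A' : Finset (Sym2 V) := A.erase s(a, b) with hA'
        set H : SimpleGraph V := SimpleGraph.fromEdgeSet (↑A : Set (Sym2 V)) with hH
        set H' : SimpleGraph V := SimpleGraph.fromEdgeSet (↑A' : Set (Sym2 V)) with hH'
        have hA'A : A' ⊆ A := A.erase_subset _
        have hsub' : ↑A' ⊆ G.edgeSet := Set.Subset.trans (Finset.coe_subset.2 hA'A) hsub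
        have hgood' : ∀ B : Finset (Sym2 V), IsBrokenCycle G η B → ¬ B ⊆ A' :=
          fun B hB hBs => hgood B hB (hBs.trans hA'A)
        have IH := ih A' (Finset.erase_ssubset heA) hsub' hgood'
        have hcardA : A.card = A'.card + 1 := by
          rw [hA', Finset.card_erase_of_mem heA]
          have := Finset.card_pos.2 hAne
          omega
        have hH'sub : H'.edgeSet ⊆ G.edgeSet := by
          rw [hH', SimpleGraph.edgeSet_fromEdgeSet]
          exact Set.Subset.trans Set.diff_subset hsub'
        -- a and b are not reachable in H'
        have hnr : ¬ H'.Reachable a b := by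
          intro hr
          obtain ⟨p0, hp⟩ := Classical.choice hr |>.toPath
          cases p0 with
          | nil => exact hGadj.ne rfl
          | cons h q =>
            cases q with
            | nil =>
              have : s(a, b) ∈ H'.edgeSet := h
              rw [hH', SimpleGraph.edgeSet_fromEdgeSet] at this
              exact Finset.notMem_erase _ _ (Finset.mem_coe.1 this.1)
            | cons h' q' =>
              rename_i c d
              have hedges : ∀ f ∈ (Walk.cons h (Walk.cons h' q')).edges, f ∈ G.edgeSet :=
                fun f hf => hH'sub ((Walk.cons h (Walk.cons h' q')).edges_subset_edgeSet hf)
              have hedgesA' : ∀ f ∈ (Walk.cons h (Walk.cons h' q')).edges, f ∈ A' := by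
                intro f hf
                have := (Walk.cons h (Walk.cons h' q')).edges_subset_edgeSet hf
                rw [hH', SimpleGraph.edgeSet_fromEdgeSet] at this
                exact Finset.mem_coe.1 this.1
              set pG := (Walk.cons h (Walk.cons h' q')).transfer G hedges with hpG
              refine hgood' (pG.edges.toFinset) ⟨a, b, pG, hp.transfer _, ?_, hGadj, ?_, rfl⟩ ?_
              · rw [hpG]
                rw [Walk.length_transfer, Walk.length_cons, Walk.length_cons]
                omega
              · intro f hf
                rw [hpG, Walk.edges_transfer] at hf
                have hfA' := hedgesA' f hf
                have hfne : f ≠ s(a, b) := Finset.ne_of_mem_erase hfA'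
                have hle := hemin f (hA'A hfA')
                have : η s(a, b) ≠ η f := fun hEq =>
                  hfne (hinj (hsub (hA'A hfA')) (hsub heA) hEq.symm)
                omega
              · intro f hf
                rw [List.mem_toFinset, hpG, Walk.edges_transfer] at hf
                exact hedgesA' f hf
        -- components strictly decrease upon adding the edge
        have hlt : Nat.card H.ConnectedComponent < Nat.card H'.ConnectedComponent := by
          haveI : Fintype H.ConnectedComponent := Fintype.ofFinite _
          haveI : Fintype H'.ConnectedComponent := Fintype.ofFinite _
          rw [Nat.card_eq_fintype_card, Nat.card_eq_fintype_card]
          have hle : H' ≤ H := by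
            rw [hH, hH']
            exact SimpleGraph.fromEdgeSet_mono (Finset.coe_subset.2 hA'A)
          refine Fintype.card_lt_of_surjective_not_injective
            (ConnectedComponent.lift (fun v => H.connectedComponentMk v)
              (fun v w p _ => ConnectedComponent.eq.2 (p.mapLe hle).reachable)) ?_ ?_
          · exact ConnectedComponent.ind (fun v => ⟨H'.connectedComponentMk v, rfl⟩)
          · intro hI
            refine hnr (ConnectedComponent.exact (hI ?_))
            show H.connectedComponentMk a = H.connectedComponentMk b
            refine ConnectedComponent.eq.2 (SimpleGraph.Adj.reachable ?_)
            rw [hH, SimpleGraph.fromEdgeSet_adj]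
            exact ⟨heA, hGadj.ne⟩
        rw [← hH'] at IH
        omega
  have hpos : 0 < Nat.card (SimpleGraph.fromEdgeSet (↑A : Set (Sym2 V))).ConnectedComponent := by
    haveI : Nonempty (SimpleGraph.fromEdgeSet (↑A : Set (Sym2 V))).ConnectedComponent :=
      ⟨(SimpleGraph.fromEdgeSet (↑A : Set (Sym2 V))).connectedComponentMk (Classical.arbitrary V)⟩
    exact Nat.card_pos
  have := main A hsub hgood
  omega


section PartB

variable [Fintype V] [DecidableEq V]

/-- `e` is the chord of some broken cycle contained in `A`. -/
def chord (G : SimpleGraph V) (η : Sym2 V → ℕ) (e : Sym2 V) (A : Finset (Sym2 V)) : Prop :=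
  ∃ (u w : V) (p : G.Walk u w), p.IsPath ∧ 2 ≤ p.length ∧ G.Adj u w ∧ e = s(u, w) ∧
    (∀ f ∈ p.edges, η e < η f) ∧ p.edges.toFinset ⊆ A

lemma chord_mono {G : SimpleGraph V} {η : Sym2 V → ℕ} {e : Sym2 V} {A A₂ : Finset (Sym2 V)}
    (hA : A ⊆ A₂) (h : chord G η e A) : chord G η e A₂ := by
  obtain ⟨u, w, p, h1, h2, h3, h4, h5, h6⟩ := h
  exact ⟨u, w, p, h1, h2, h3, h4, h5, h6.trans hA⟩

noncomputable def chordSet (G : SimpleGraph V) [DecidableRel G.Adj] (η : Sym2 V → ℕ)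
    (A : Finset (Sym2 V)) : Finset (Sym2 V) :=
  letI : DecidablePred fun e => chord G η e A := Classical.decPred _
  G.edgeFinset.filter fun e => chord G η e A

variable {G : SimpleGraph V} [DecidableRel G.Adj] {η : Sym2 V → ℕ}

lemma mem_chordSet_iff {e : Sym2 V} {A : Finset (Sym2 V)} :
    e ∈ chordSet G η A ↔ chord G η e A := by
  have hmf : e ∈ chordSet G η A ↔ e ∈ G.edgeFinset ∧ chord G η e A := by
    letI : DecidablePred fun e : Sym2 V => chord G η e A := Classical.decPred _
    exact Finset.mem_filter
  rw [hmf]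
  constructor
  · exact fun h => h.2
  · intro h
    refine ⟨?_, h⟩
    obtain ⟨u, w, p, _, _, h3, h4, _, _⟩ := h
    rw [SimpleGraph.mem_edgeFinset, h4]
    exact h3

lemma chordSet_mono {A A₂ : Finset (Sym2 V)} (h : A ⊆ A₂) :
    chordSet G η A ⊆ chordSet G η A₂ := by
  intro e he
  rw [mem_chordSet_iff] at he ⊢
  exact chord_mono h he

lemma bad_iff_chordSet_nonempty {A : Finset (Sym2 V)} :
    (∃ B, IsBrokenCycle G η B ∧ B ⊆ A) ↔ (chordSet G η A).Nonempty := by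
  constructor
  · rintro ⟨B, ⟨u, w, p, h1, h2, h3, h4, h5⟩, hBA⟩
    exact ⟨s(u, w), mem_chordSet_iff.2 ⟨u, w, p, h1, h2, h3, rfl, h4, by rw [← h5]; exact hBA⟩⟩
  · rintro ⟨e, he⟩
    obtain ⟨u, w, p, h1, h2, h3, h4, h5, h6⟩ := mem_chordSet_iff.1 he
    exact ⟨p.edges.toFinset, ⟨u, w, p, h1, h2, h3, by rw [← h4]; exact h5, rfl⟩, h6⟩

variable [Nonempty V]

/-- The minimal chord of `A`. -/
noncomputable def minChord (G : SimpleGraph V) [DecidableRel G.Adj] (η : Sym2 V → ℕ)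
    (A : Finset (Sym2 V)) : Sym2 V :=
  if h : (chordSet G η A).Nonempty then
    Classical.choose ((chordSet G η A).exists_min_image η h)
  else s(Classical.arbitrary V, Classical.arbitrary V)

lemma minChord_spec {A : Finset (Sym2 V)} (h : (chordSet G η A).Nonempty) :
    minChord G η A ∈ chordSet G η A ∧ ∀ e' ∈ chordSet G η A, η (minChord G η A) ≤ η e' := by
  rw [minChord, dif_pos h]
  obtain ⟨h1, h2⟩ := Classical.choose_spec ((chordSet G η A).exists_min_image η h)
  exact ⟨h1, h2⟩

lemma chordSet_subset_edgeSet {A : Finset (Sym2 V)} {e : Sym2 V} (he : e ∈ chordSet G η A) :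
    e ∈ G.edgeSet := by
  obtain ⟨u, w, p, _, _, h3, h4, _, _⟩ := mem_chordSet_iff.1 he
  rw [h4]; exact h3

/-- The minimal chord lies in no broken cycle contained in `A`. -/
lemma minChord_not_mem_brokenCycle (hinj : Set.InjOn η G.edgeSet) {A : Finset (Sym2 V)}
    (h : (chordSet G η A).Nonempty) {B : Finset (Sym2 V)} (hB : IsBrokenCycle G η B)
    (hBA : B ⊆ A) : minChord G η A ∉ B := by
  intro hmem
  obtain ⟨u, w, p, h1, h2, h3, h4, h5⟩ := hB
  have hchord : s(u, w) ∈ chordSet G η A :=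
    mem_chordSet_iff.2 ⟨u, w, p, h1, h2, h3, rfl, h4, by rw [← h5]; exact hBA⟩
  have hlt : η s(u, w) < η (minChord G η A) := by
    refine h4 _ ?_
    rw [h5] at hmem
    exact List.mem_toFinset.1 hmem
  have := (minChord_spec h).2 _ hchord
  omega

lemma chordSet_erase_minChord (hinj : Set.InjOn η G.edgeSet) {A : Finset (Sym2 V)}
    (h : (chordSet G η A).Nonempty) :
    chordSet G η (A.erase (minChord G η A)) = chordSet G η A := by
  refine Finset.Subset.antisymm (chordSet_mono (A.erase_subset _)) ?_
  intro e' he'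
  obtain ⟨u, w, p, h1, h2, h3, h4, h5, h6⟩ := mem_chordSet_iff.1 he'
  have hnm : minChord G η A ∉ p.edges.toFinset :=
    minChord_not_mem_brokenCycle hinj h ⟨u, w, p, h1, h2, h3, by rw [← h4]; exact h5, rfl⟩ h6
  exact mem_chordSet_iff.2 ⟨u, w, p, h1, h2, h3, h4, h5,
    Finset.subset_erase.2 ⟨h6, hnm⟩⟩

/-- Transfer a `G`-walk whose edges lie in `S` to `fromEdgeSet ↑S`. -/
lemma reach_fromEdgeSet {u w : V} (q : G.Walk u w) (S : Finset (Sym2 V))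
    (h : ∀ g ∈ q.edges, g ∈ S) : (SimpleGraph.fromEdgeSet (↑S : Set (Sym2 V))).Reachable u w := by
  refine ⟨q.transfer _ fun g hg => ?_⟩
  rw [SimpleGraph.edgeSet_fromEdgeSet]
  exact ⟨h g hg, SimpleGraph.not_isDiag_of_mem_edgeSet G (q.edges_subset_edgeSet hg)⟩

lemma chordSet_insert_minChord (hinj : Set.InjOn η G.edgeSet) {A : Finset (Sym2 V)}
    (hsubA : ↑A ⊆ G.edgeSet) (h : (chordSet G η A).Nonempty) :
    chordSet G η (insert (minChord G η A) A) = chordSet G η A := by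
  refine Finset.Subset.antisymm ?_ (chordSet_mono (Finset.subset_insert _ _))
  intro e' he'
  set e := minChord G η A with hedef
  obtain ⟨u', w', p', hp1, hp2, hp3, hp4, hp5, hp6⟩ := mem_chordSet_iff.1 he'
  by_cases hmem : e ∈ p'.edges
  · -- splice the path witnessing `e ∈ chordSet A` into `p'`
    obtain ⟨u, w, q, hq1, hq2, hq3, hq4, hq5, hq6⟩ := mem_chordSet_iff.1 (minChord_spec h).1
    rw [← hedef] at hq4 hq5
    have hηe : η e' < η e := hp5 e hmem
    set M : Finset (Sym2 V) := (p'.edges.toFinset.erase e) ∪ q.edges.toFinset with hM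
    have hMA : M ⊆ A := by
      intro f hf
      rw [hM, Finset.mem_union] at hf
      rcases hf with hf | hf
      · have h1 := Finset.ne_of_mem_erase hf
        have h2 := hp6 (Finset.mem_of_mem_erase hf)
        rw [Finset.mem_insert] at h2
        tauto
      · exact hq6 hf
    have hMmin : ∀ f ∈ M, η e' < η f := by
      intro f hf
      rw [hM, Finset.mem_union] at hf
      rcases hf with hf | hf
      · exact hp5 f (List.mem_toFinset.1 (Finset.mem_of_mem_erase hf))
      · have := hq5 f (List.mem_toFinset.1 hf)
        omega
    set K := SimpleGraph.fromEdgeSet (↑M : Set (Sym2 V)) with hK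
    have hKG : K ≤ G := by
      rw [hK, ← SimpleGraph.fromEdgeSet_edgeSet G]
      exact SimpleGraph.fromEdgeSet_mono (Set.Subset.trans (Finset.coe_subset.2 hMA) hsubA)
    have hKuw : K.Reachable u w := reach_fromEdgeSet q M (fun g hg => by
      rw [hM, Finset.mem_union]; exact Or.inr (List.mem_toFinset.2 hg))
    have hKp : ∀ {x y : V} (r : G.Walk x y), (∀ f ∈ r.edges, f ∈ p'.edges) → K.Reachable x y := by
      intro x y r
      induction r with
      | nil => exact fun _ => Reachable.refl _
      | cons hadj t ih =>
        rename_i x₀ y₀ z₀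
        intro hr
        have hxz : s(x₀, y₀) ∈ p'.edges := hr _ (by simp)
        have step : K.Reachable x₀ y₀ := by
          by_cases hxe : s(x₀, y₀) = e
          · rw [hq4] at hxe
            rw [Sym2.eq_iff] at hxe
            rcases hxe with ⟨rfl, rfl⟩ | ⟨rfl, rfl⟩
            · exact hKuw
            · exact hKuw.symm
          · refine SimpleGraph.Adj.reachable ?_
            rw [hK, SimpleGraph.fromEdgeSet_adj]
            refine ⟨?_, hadj.ne⟩
            rw [Finset.mem_coe, hM, Finset.mem_union]
            exact Or.inl (Finset.mem_erase.2 ⟨hxe, List.mem_toFinset.2 hxz⟩)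
        exact step.trans (ih (fun f hf => hr f (by simp [hf])))
    have hKreach : K.Reachable u' w' := hKp p' (fun f hf => hf)
    obtain ⟨r0, hr0⟩ := (Classical.choice hKreach).toPath
    have hr0G : ∀ f ∈ r0.edges, f ∈ G.edgeSet := fun f hf =>
      SimpleGraph.edgeSet_mono hKG (r0.edges_subset_edgeSet hf)
    have hr0M : ∀ f ∈ r0.edges, f ∈ M := by
      intro f hf
      have hmm := r0.edges_subset_edgeSet hf
      rw [hK, SimpleGraph.edgeSet_fromEdgeSet] at hmm
      exact Finset.mem_coe.1 hmm.1
    refine mem_chordSet_iff.2 ⟨u', w', r0.transfer G hr0G, hr0.transfer _, ?_, hp3, hp4, ?_, ?_⟩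
    · -- length ≥ 2
      cases r0 with
      | nil => exact absurd hp3 G.irrefl
      | @cons _ c _ hadj t =>
        cases t with
        | nil =>
          exfalso
          have hsm : s(u', w') ∈ M := hr0M s(u', w') (by
            rw [Walk.edges_cons]
            simp)
          have := hMmin _ hsm
          rw [← hp4] at this
          omega
        | cons hadj' t' =>
          rw [Walk.length_transfer]
          simp only [Walk.length_cons]
          omega
    · intro f hf
      rw [Walk.edges_transfer] at hf
      exact hMmin f (hr0M f hf)
    · intro f hf
      rw [List.mem_toFinset, Walk.edges_transfer] at hf
      exact hMA (hr0M f hf)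
  · refine mem_chordSet_iff.2 ⟨u', w', p', hp1, hp2, hp3, hp4, hp5, ?_⟩
    intro f hf
    have hfi := hp6 hf
    rw [Finset.mem_insert] at hfi
    rcases hfi with rfl | h2
    · exact absurd (List.mem_toFinset.1 hf) hmem
    · exact h2

lemma minChord_eq_of_chordSet_eq (hinj : Set.InjOn η G.edgeSet) {A A₂ : Finset (Sym2 V)}
    (hne : (chordSet G η A).Nonempty) (hEq : chordSet G η A₂ = chordSet G η A) :
    minChord G η A₂ = minChord G η A := by
  have hne₂ : (chordSet G η A₂).Nonempty := by rw [hEq]; exact hne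
  obtain ⟨hm₂, hmin₂⟩ := minChord_spec hne₂
  obtain ⟨hm₁, hmin₁⟩ := minChord_spec hne
  have le₁ : η (minChord G η A₂) ≤ η (minChord G η A) := hmin₂ _ (by rw [hEq]; exact hm₁)
  have le₂ : η (minChord G η A) ≤ η (minChord G η A₂) := hmin₁ _ (by rw [← hEq]; exact hm₂)
  exact hinj (chordSet_subset_edgeSet hm₂) (chordSet_subset_edgeSet hm₁) (le_antisymm le₁ le₂)

lemma betaProd_insert (L : V → Finset ℕ) {A₀ : Finset (Sym2 V)} {u w : V} {e : Sym2 V}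
    (he : e = s(u, w))
    (hr : (SimpleGraph.fromEdgeSet (↑A₀ : Set (Sym2 V))).Reachable u w) :
    betaProd L (SimpleGraph.fromEdgeSet (↑(insert e A₀) : Set (Sym2 V)))
      = betaProd L (SimpleGraph.fromEdgeSet (↑A₀ : Set (Sym2 V))) := by
  refine betaProd_congr L fun a b => ⟨?_, ?_⟩
  · refine reach_of_adj_reach (fun x y hxy => ?_)
    rw [SimpleGraph.fromEdgeSet_adj] at hxy
    obtain ⟨hmem, hne⟩ := hxy
    rw [Finset.coe_insert, Set.mem_insert_iff] at hmem
    rcases hmem with hmem | hmem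
    · rw [he, Sym2.eq_iff] at hmem
      rcases hmem with ⟨rfl, rfl⟩ | ⟨rfl, rfl⟩
      · exact hr
      · exact hr.symm
    · exact SimpleGraph.Adj.reachable (by rw [SimpleGraph.fromEdgeSet_adj]; exact ⟨hmem, hne⟩)
  · refine fun hrr => hrr.mono (SimpleGraph.fromEdgeSet_mono ?_)
    rw [Finset.coe_insert]
    exact Set.subset_insert _ _

lemma partB (hinj : Set.InjOn η G.edgeSet) (L : V → Finset ℕ)
    [DecidablePred fun A : Finset (Sym2 V) => ∃ B, IsBrokenCycle G η B ∧ B ⊆ A] :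
    ∑ A ∈ (G.edgeFinset.powerset.filter fun A => ∃ B, IsBrokenCycle G η B ∧ B ⊆ A),
      (-1 : ℤ) ^ A.card * (betaProd L (SimpleGraph.fromEdgeSet (↑A : Set (Sym2 V))) : ℤ) = 0 := by
  classical
  -- facts available for each member of the sum
  have hfacts : ∀ A ∈ (G.edgeFinset.powerset.filter
      fun A => ∃ B, IsBrokenCycle G η B ∧ B ⊆ A),
      (chordSet G η A).Nonempty ∧ A ⊆ G.edgeFinset ∧ ↑A ⊆ G.edgeSet := by
    intro A hA
    rw [Finset.mem_filter, Finset.mem_powerset] at hA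
    refine ⟨bad_iff_chordSet_nonempty.1 hA.2, hA.1, ?_⟩
    rw [← SimpleGraph.coe_edgeFinset]
    exact_mod_cast hA.1
  -- reachability of the endpoints of the minimal chord avoiding itself
  have hreach : ∀ (A : Finset (Sym2 V)), (chordSet G η A).Nonempty →
      ∃ u w : V, minChord G η A = s(u, w) ∧
        (SimpleGraph.fromEdgeSet (↑(A.erase (minChord G η A)) : Set (Sym2 V))).Reachable u w := by
    intro A hbad
    obtain ⟨u, w, q, hq1, hq2, hq3, hq4, hq5, hq6⟩ := mem_chordSet_iff.1 (minChord_spec hbad).1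
    refine ⟨u, w, hq4, reach_fromEdgeSet q _ (fun g hg => ?_)⟩
    refine Finset.mem_erase.2 ⟨?_, hq6 (List.mem_toFinset.2 hg)⟩
    intro hge
    have := hq5 g hg
    rw [hge] at this
    omega
  refine Finset.sum_involution
    (fun A _ => if minChord G η A ∈ A then A.erase (minChord G η A) else insert (minChord G η A) A)
    ?_ ?_ ?_ ?_
  · -- opposite signs, equal beta products
    intro A hA
    obtain ⟨hbad, hApow, hsubA⟩ := hfacts A hA
    obtain ⟨u, w, hmc, hre⟩ := hreach A hbad
    by_cases hin : minChord G η A ∈ A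
    · rw [if_pos hin]
      have hbeta : betaProd L (SimpleGraph.fromEdgeSet (↑A : Set (Sym2 V)))
          = betaProd L (SimpleGraph.fromEdgeSet
              (↑(A.erase (minChord G η A)) : Set (Sym2 V))) := by
        conv_lhs => rw [← Finset.insert_erase hin]
        exact betaProd_insert L hmc hre
      rw [hbeta, Finset.card_erase_of_mem hin]
      obtain ⟨k, hk⟩ : ∃ k, A.card = k + 1 :=
        ⟨A.card - 1, (Nat.succ_pred_eq_of_pos (Finset.card_pos.2 ⟨_, hin⟩)).symm⟩
      rw [hk]
      simp [pow_succ]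
    · rw [if_neg hin]
      have herase : A.erase (minChord G η A) = A := Finset.erase_eq_of_notMem hin
      rw [herase] at hre
      have hbeta : betaProd L (SimpleGraph.fromEdgeSet
            (↑(insert (minChord G η A) A) : Set (Sym2 V)))
          = betaProd L (SimpleGraph.fromEdgeSet (↑A : Set (Sym2 V))) :=
        betaProd_insert L hmc hre
      rw [hbeta, Finset.card_insert_of_notMem hin]
      simp [pow_succ]
  · -- the involution moves every element
    intro A hA _
    by_cases hin : minChord G η A ∈ A
    · rw [if_pos hin]
      intro hEq
      have hx := Finset.notMem_erase (minChord G η A) A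
      rw [hEq] at hx
      exact hx hin
    · rw [if_neg hin]
      intro hEq
      have hx := Finset.mem_insert_self (minChord G η A) A
      rw [hEq] at hx
      exact hin hx
  · -- membership
    intro A hA
    obtain ⟨hbad, hApow, hsubA⟩ := hfacts A hA
    rw [Finset.mem_filter, Finset.mem_powerset]
    by_cases hin : minChord G η A ∈ A
    · rw [if_pos hin]
      constructor
      · exact (Finset.erase_subset _ _).trans hApow
      · refine bad_iff_chordSet_nonempty.2 ?_
        rw [chordSet_erase_minChord hinj hbad]
        exact hbad
    · rw [if_neg hin]
      constructor
      · refine Finset.insert_subset ?_ hApow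
        exact SimpleGraph.mem_edgeFinset.2 (chordSet_subset_edgeSet (minChord_spec hbad).1)
      · exact bad_iff_chordSet_nonempty.2
          (hbad.mono (chordSet_mono (Finset.subset_insert _ _)))
  · -- involutive
    intro A hA
    obtain ⟨hbad, hApow, hsubA⟩ := hfacts A hA
    by_cases hin : minChord G η A ∈ A
    · rw [if_pos hin]
      have hEq : chordSet G η (A.erase (minChord G η A)) = chordSet G η A :=
        chordSet_erase_minChord hinj hbad
      have hmc : minChord G η (A.erase (minChord G η A)) = minChord G η A :=
        minChord_eq_of_chordSet_eq hinj hbad hEq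
      rw [hmc, if_neg (Finset.notMem_erase _ _), Finset.insert_erase hin]
    · rw [if_neg hin]
      have hEq : chordSet G η (insert (minChord G η A) A) = chordSet G η A :=
        chordSet_insert_minChord hinj hsubA hbad
      have hmc : minChord G η (insert (minChord G η A) A) = minChord G η A :=
        minChord_eq_of_chordSet_eq hinj hbad hEq
      rw [hmc, if_pos (Finset.mem_insert_self _ _), Finset.erase_insert hin]

end PartB


end BrokenCycleHelpers

theorem stmt19 [Fintype V] [DecidableEq V] [Nonempty V]
    (G : SimpleGraph V) [DecidableRel G.Adj]
    (n m : ℕ) (hn : n = Fintype.card V) (hm : m = G.edgeFinset.card)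
    (η : Sym2 V → ℕ) (hη : Set.BijOn η G.edgeSet (Set.Icc 1 m))
    (L : V → Finset ℕ) :
    (listCol G L : ℤ) =
      ∑ i ∈ Finset.range n, (-1 : ℤ) ^ i *
        ∑ᶠ A ∈ NBset G η i,
          (betaProd L (SimpleGraph.fromEdgeSet (↑A : Set (Sym2 V))) : ℤ) := by
  classical
  have hinj : Set.InjOn η G.edgeSet := hη.injOn
  rw [partA G L]
  have hsplit := Finset.sum_filter_add_sum_filter_not G.edgeFinset.powerset
      (fun A : Finset (Sym2 V) => ∃ B, IsBrokenCycle G η B ∧ B ⊆ A)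
      (fun A : Finset (Sym2 V) => (-1 : ℤ) ^ A.card *
        (betaProd L (SimpleGraph.fromEdgeSet (↑A : Set (Sym2 V))) : ℤ))
  rw [← hsplit, partB hinj L, zero_add]
  -- identify `NBset G η i` with the corresponding finset
  have hset : ∀ i : ℕ, NBset G η i =
      ↑((G.edgeFinset.powerset.filter fun A => ¬ ∃ B, IsBrokenCycle G η B ∧ B ⊆ A).filter
          fun A => A.card = i) := by
    intro i
    ext A
    simp only [NBset, Set.mem_setOf_eq, Finset.coe_filter, Finset.mem_filter,
      Finset.mem_powerset, Set.mem_setOf_eq]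
    constructor
    · rintro ⟨h1, h2, h3⟩
      refine ⟨⟨?_, ?_⟩, h2⟩
      · intro f hf
        exact SimpleGraph.mem_edgeFinset.2 (h1 hf)
      · rintro ⟨B, hB, hBA⟩
        exact h3 B hB hBA
    · rintro ⟨⟨h1, h2⟩, h3⟩
      refine ⟨?_, h3, fun B hB hBA => h2 ⟨B, hB, hBA⟩⟩
      intro f hf
      exact SimpleGraph.mem_edgeFinset.1 (h1 hf)
  have hto : ∀ A ∈ G.edgeFinset.powerset.filter
      (fun A => ¬ ∃ B, IsBrokenCycle G η B ∧ B ⊆ A), A.card ∈ Finset.range n := by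
    intro A hA
    rw [Finset.mem_filter, Finset.mem_powerset] at hA
    rw [Finset.mem_range, hn]
    refine partC G η hinj A ?_ (fun B hB hBA => hA.2 ⟨B, hB, hBA⟩)
    intro f hf
    exact SimpleGraph.mem_edgeFinset.1 (hA.1 hf)
  rw [← Finset.sum_fiberwise_of_maps_to hto (fun A => (-1 : ℤ) ^ A.card *
      (betaProd L (SimpleGraph.fromEdgeSet (↑A : Set (Sym2 V))) : ℤ))]
  refine Finset.sum_congr rfl fun i hi => ?_
  rw [hset i, finsum_mem_coe_finset, Finset.mul_sum]
  refine Finset.sum_congr rfl fun A hA => ?_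
  rw [(Finset.mem_filter.1 hA).2]
end
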